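/- arXiv:2306.00843 — 5 statements merged into one kernel-verified Lean document; each statement's English description precedes it below -/
import Mathlib

section
/- Let T be a tree with h₁ leaves and h₂ vertices of degree two, and let F be a family of paths in T that separates and covers the edge set E(T). Then 2|F| ≥ h₁ + h₂. -/
open SimpleGraph
open scoped Classical

universe u

variable {V : Type u}

/-- A path in a graph `G`, recorded with its two endpoints. -/
def PathIn {V : Type u} (G : SimpleGraph V) : Type u :=
  Σ a b : V, {p : G.Walk a b // p.IsPath}

/-- The path `P` contains the vertex `x`. -/
def PathIn.vmem {G : SimpleGraph V} (x : V) (P : PathIn G) : Prop :=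
  x ∈ P.2.2.1.support

/-- The path `P` contains the edge `e`. -/
def PathIn.emem {G : SimpleGraph V} (e : Sym2 V) (P : PathIn G) : Prop :=
  e ∈ P.2.2.1.edges

/-- The path `P` contains the element `s` (a vertex or an edge). -/
def ElemMem (G : SimpleGraph V) (s : V ⊕ Sym2 V) (P : PathIn G) : Prop :=
  Sum.elim (fun x => PathIn.vmem x P) (fun e => PathIn.emem e P) s

/-- `F` separates the set `S` of elements (vertices and/or edges) of `G`. -/
def Separates (G : SimpleGraph V) (S : Set (V ⊕ Sym2 V)) (F : Set (PathIn G)) : Prop :=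
  ∀ s ∈ S, ∀ t ∈ S, s ≠ t → ∃ P ∈ F,
    (ElemMem G s P ∧ ¬ ElemMem G t P) ∨ (¬ ElemMem G s P ∧ ElemMem G t P)

/-- `F` covers the set `S` of elements of `G`. -/
def Covers (G : SimpleGraph V) (S : Set (V ⊕ Sym2 V)) (F : Set (PathIn G)) : Prop :=
  ∀ s ∈ S, ∃ P ∈ F, ElemMem G s P

/-- `F` separates the edges of `G`. -/
def EdgeSep (G : SimpleGraph V) (F : Set (PathIn G)) : Prop :=
  ∀ e ∈ G.edgeSet, ∀ f ∈ G.edgeSet, e ≠ f → ∃ P ∈ F,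
    (PathIn.emem e P ∧ ¬ PathIn.emem f P) ∨ (¬ PathIn.emem e P ∧ PathIn.emem f P)

/-- `F` covers the edges of `G`. -/
def EdgeCover (G : SimpleGraph V) (F : Set (PathIn G)) : Prop :=
  ∀ e ∈ G.edgeSet, ∃ P ∈ F, PathIn.emem e P

/-- `F` separates the vertices of `G`. -/
def VertexSep (G : SimpleGraph V) (F : Set (PathIn G)) : Prop :=
  ∀ x y : V, x ≠ y → ∃ P ∈ F,
    (PathIn.vmem x P ∧ ¬ PathIn.vmem y P) ∨ (¬ PathIn.vmem x P ∧ PathIn.vmem y P)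

/-- `F` covers the vertices of `G`. -/
def VertexCover (G : SimpleGraph V) (F : Set (PathIn G)) : Prop :=
  ∀ x : V, ∃ P ∈ F, PathIn.vmem x P

/-- The number of leaves of `G`. -/
noncomputable def leafCount (G : SimpleGraph V) [Fintype V] : ℕ :=
  Nat.card {x : V | G.degree x = 1}

/-- The number of degree-two vertices of `G`. -/
noncomputable def deg2Count (G : SimpleGraph V) [Fintype V] : ℕ :=
  Nat.card {x : V | G.degree x = 2}

/-- The set of interior edges: edges with neither endpoint a leaf. -/
noncomputable def interiorEdgeSet (G : SimpleGraph V) [Fintype V] : Set (Sym2 V) :=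
  {e : Sym2 V | e ∈ G.edgeSet ∧ ∀ x ∈ e, G.degree x ≠ 1}

private lemma exists_edge_end' {G : SimpleGraph V} {a b : V} (q : G.Walk a b) (h : a ≠ b) :
    ∃ e ∈ q.edges, b ∈ e := by
  induction q with
  | nil => exact absurd rfl h
  | @cons u c w hadj q ih =>
    by_cases hc : c = w
    · subst hc; exact ⟨s(u, c), by simp, by simp⟩
    · obtain ⟨e, he, hbe⟩ := ih hc
      exact ⟨e, by simp [he], hbe⟩

private lemma exists_edge_start' {G : SimpleGraph V} {a b : V} (q : G.Walk a b) (h : a ≠ b) :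
    ∃ e ∈ q.edges, a ∈ e := by
  cases q with
  | nil => exact absurd rfl h
  | @cons _ c _ hadj q => exact ⟨s(a, c), by simp, by simp⟩

private lemma interior_two_edges {G : SimpleGraph V} {a b x : V} (p : G.Walk a b)
    (hp : p.IsPath) (hx : x ∈ p.support) (hxa : x ≠ a) (hxb : x ≠ b) :
    ∃ e₁ ∈ p.edges, ∃ e₂ ∈ p.edges, e₁ ≠ e₂ ∧ x ∈ e₁ ∧ x ∈ e₂ := by
  classical
  obtain ⟨e₁, he₁, hxe₁⟩ := exists_edge_end' (p.takeUntil x hx) (Ne.symm hxa)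
  obtain ⟨e₂, he₂, hxe₂⟩ := exists_edge_start' (p.dropUntil x hx) hxb
  have hed : p.edges = (p.takeUntil x hx).edges ++ (p.dropUntil x hx).edges := by
    conv_lhs => rw [← p.take_spec hx]
    exact SimpleGraph.Walk.edges_append _ _
  have hnd := hp.edges_nodup
  rw [hed, List.nodup_append] at hnd
  refine ⟨e₁, ?_, e₂, ?_, ?_, hxe₁, hxe₂⟩
  · rw [hed]; exact List.mem_append_left _ he₁
  · rw [hed]; exact List.mem_append_right _ he₂
  · rintro rfl; exact hnd.2.2 _ he₁ _ he₂ rfl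

private lemma endpoint_of_degree {G : SimpleGraph V} [Fintype V] {F : Set (PathIn G)}
    (hsep : EdgeSep G F) (hcov : EdgeCover G F) {x : V}
    (hx : G.degree x = 1 ∨ G.degree x = 2) :
    ∃ P ∈ F, P.1 = x ∨ P.2.1 = x := by
  classical
  -- helper: decompose an edge of G containing x
  have hdec : ∀ e ∈ G.edgeSet, x ∈ e → ∃ w, e = s(x, w) ∧ w ∈ G.neighborFinset x := by
    intro e he hxe
    obtain ⟨w, rfl⟩ := Sym2.mem_iff_exists.mp hxe
    exact ⟨w, rfl, by rw [SimpleGraph.mem_neighborFinset]; exact he⟩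
  -- helper: if x in support of a path P and not an endpoint, two distinct incident edges of P
  have hint : ∀ P : PathIn G, x ∈ P.2.2.1.support → ¬ (P.1 = x ∨ P.2.1 = x) →
      ∃ e₁ ∈ P.2.2.1.edges, ∃ e₂ ∈ P.2.2.1.edges, e₁ ≠ e₂ ∧ x ∈ e₁ ∧ x ∈ e₂ := by
    intro P hxs hni
    push_neg at hni
    exact interior_two_edges P.2.2.1 P.2.2.2 hxs (fun h => hni.1 h.symm)
      (fun h => hni.2 h.symm)
  rcases hx with hx1 | hx2
  · -- degree 1
    obtain ⟨y, hy⟩ := Finset.card_eq_one.mp (by rw [← hx1]; rfl)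
    have hadj : G.Adj x y := by
      rw [← SimpleGraph.mem_neighborFinset, hy]; exact Finset.mem_singleton_self y
    obtain ⟨P, hPF, hPe⟩ := hcov s(x, y) hadj
    refine ⟨P, hPF, ?_⟩
    by_contra hni
    have hxs : x ∈ P.2.2.1.support := SimpleGraph.Walk.fst_mem_support_of_mem_edges _ hPe
    obtain ⟨e₁, h1, e₂, h2, hne, hx1e, hx2e⟩ := hint P hxs hni
    obtain ⟨w₁, rfl, hw₁⟩ := hdec e₁ (P.2.2.1.edges_subset_edgeSet h1) hx1e
    obtain ⟨w₂, rfl, hw₂⟩ := hdec e₂ (P.2.2.1.edges_subset_edgeSet h2) hx2e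
    rw [hy, Finset.mem_singleton] at hw₁ hw₂
    subst hw₁; subst hw₂; exact hne rfl
  · -- degree 2
    obtain ⟨y, z, hyz, hN⟩ := Finset.card_eq_two.mp (by rw [← hx2]; rfl)
    have hadjy : G.Adj x y := by
      rw [← SimpleGraph.mem_neighborFinset, hN]; simp
    have hadjz : G.Adj x z := by
      rw [← SimpleGraph.mem_neighborFinset, hN]; simp
    have hef : s(x, y) ≠ s(x, z) := fun h => hyz (Sym2.congr_right.mp h)
    obtain ⟨P, hPF, hP⟩ := hsep s(x, y) hadjy s(x, z) hadjz hef
    refine ⟨P, hPF, ?_⟩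
    by_contra hni
    rcases hP with ⟨hin, hout⟩ | ⟨hout, hin⟩
    all_goals {
      have hxs : x ∈ P.2.2.1.support := SimpleGraph.Walk.fst_mem_support_of_mem_edges _ hin
      obtain ⟨e₁, h1, e₂, h2, hne, hx1e, hx2e⟩ := hint P hxs hni
      obtain ⟨w₁, rfl, hw₁⟩ := hdec e₁ (P.2.2.1.edges_subset_edgeSet h1) hx1e
      obtain ⟨w₂, rfl, hw₂⟩ := hdec e₂ (P.2.2.1.edges_subset_edgeSet h2) hx2e
      rw [hN, Finset.mem_insert, Finset.mem_singleton] at hw₁ hw₂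
      have hb1 : s(x, w₁) ∈ P.2.2.1.edges := h1
      have hb2 : s(x, w₂) ∈ P.2.2.1.edges := h2
      rcases hw₁ with rfl | rfl <;> rcases hw₂ with rfl | rfl
      · exact hne rfl
      · first
        | exact hout hb2
        | exact hout hb1
      · first
        | exact hout hb1
        | exact hout hb2
      · exact hne rfl
    }

theorem stmt1 [Fintype V] (G : SimpleGraph V) (hT : G.IsTree)
    (F : Set (PathIn G)) (hF : F.Finite)
    (hsep : EdgeSep G F) (hcov : EdgeCover G F) :
    leafCount G + deg2Count G ≤ 2 * F.ncard := by
  classical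
  set A := {x : V | G.degree x = 1} with hA
  set B := {x : V | G.degree x = 2} with hB
  set E1 : Set V := (fun P : PathIn G => P.1) '' F with hE1
  set E2 : Set V := (fun P : PathIn G => P.2.1) '' F with hE2
  have hsub : A ∪ B ⊆ E1 ∪ E2 := by
    rintro x (hx | hx) <;>
    [obtain ⟨P, hPF, hP⟩ := endpoint_of_degree hsep hcov (Or.inl hx);
     obtain ⟨P, hPF, hP⟩ := endpoint_of_degree hsep hcov (Or.inr hx)] <;>
    rcases hP with h | h <;>
    [exact Or.inl ⟨P, hPF, h⟩; exact Or.inr ⟨P, hPF, h⟩;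
     exact Or.inl ⟨P, hPF, h⟩; exact Or.inr ⟨P, hPF, h⟩]
  have hdisj : Disjoint A B := by
    rw [Set.disjoint_left]
    intro x hx1 hx2
    simp only [hA, hB, Set.mem_setOf_eq] at hx1 hx2
    omega
  have hAB : (A ∪ B).ncard = A.ncard + B.ncard :=
    Set.ncard_union_eq hdisj (Set.toFinite _) (Set.toFinite _)
  calc leafCount G + deg2Count G = (A ∪ B).ncard := by
        rw [leafCount, deg2Count, Nat.card_coe_set_eq, Nat.card_coe_set_eq, hAB]
    _ ≤ (E1 ∪ E2).ncard :=
        Set.ncard_le_ncard hsub ((hF.image _).union (hF.image _))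
    _ ≤ E1.ncard + E2.ncard := Set.ncard_union_le _ _
    _ ≤ F.ncard + F.ncard := add_le_add (Set.ncard_image_le hF) (Set.ncard_image_le hF)
    _ = 2 * F.ncard := (two_mul _).symm
end

section
/- Let T be a tree and F a family of paths in T that separates V(T). If xy is an edge of T with both x and y of degree 2 in T, then x or y is an endpoint of some path in F. -/
open SimpleGraph
open scoped Classical

universe u

variable {V : Type u}

lemma key_endpoint [Fintype V] (G : SimpleGraph V) {a b x y : V}
    (p : G.Walk a b) (hp : p.IsPath) (hxs : x ∈ p.support) (hys : y ∉ p.support)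
    (hadj : G.Adj x y) (hdeg : G.degree x = 2) : x = a ∨ x = b := by
  by_contra hcon
  push_neg at hcon
  obtain ⟨hxa, hxb⟩ := hcon
  set q := p.takeUntil x hxs with hq
  set r := p.dropUntil x hxs with hr
  have hspec : q.append r = p := p.take_spec hxs
  have hnodup : (q.support ++ r.support.tail).Nodup := by
    have := hp.support_nodup
    rw [← hspec, SimpleGraph.Walk.support_append] at this
    exact this
  have hsupp : p.support = q.support ++ r.support.tail := by
    rw [← hspec, SimpleGraph.Walk.support_append]
  -- q not nil, r not nil
  have hqn : ¬ q.reverse.Nil := Walk.not_nil_of_ne hxa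
  have hrn : ¬ r.Nil := Walk.not_nil_of_ne hxb
  obtain ⟨u, hxu, q', hq'⟩ := Walk.not_nil_iff.mp hqn
  obtain ⟨v, hxv, r', hr'⟩ := Walk.not_nil_iff.mp hrn
  have hu : u ∈ q.support := by
    have : u ∈ q.reverse.support := by rw [hq']; simp
    rwa [Walk.support_reverse, List.mem_reverse] at this
  have hv : v ∈ r.support.tail := by
    rw [hr', Walk.support_cons]
    simp [Walk.start_mem_support]
  -- distinctness
  have huv : u ≠ v := by
    intro h
    subst h
    exact (List.disjoint_of_nodup_append hnodup) hu hv
  have hyu : y ≠ u := fun h => hys (by rw [hsupp, List.mem_append]; exact Or.inl (h ▸ hu))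
  have hyv : y ≠ v := fun h => hys (by rw [hsupp, List.mem_append]; exact Or.inr (h ▸ hv))
  -- three distinct neighbors
  have hsub : ({y, u, v} : Finset V) ⊆ G.neighborFinset x := by
    intro z hz
    simp only [Finset.mem_insert, Finset.mem_singleton] at hz
    rw [SimpleGraph.mem_neighborFinset]
    rcases hz with rfl | rfl | rfl
    · exact hadj
    · exact hxu
    · exact hxv
  have hcard : ({y, u, v} : Finset V).card = 3 := by
    rw [Finset.card_insert_of_notMem (by simp [hyu, hyv]),
      Finset.card_insert_of_notMem (by simp [huv])]
    simp
  have := Finset.card_le_card hsub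
  rw [hcard, show (G.neighborFinset x).card = G.degree x from rfl, hdeg] at this
  omega

theorem stmt3 [Fintype V] (G : SimpleGraph V) (hT : G.IsTree)
    (F : Set (PathIn G)) (hsep : VertexSep G F)
    (x y : V) (hxy : G.Adj x y) (hx : G.degree x = 2) (hy : G.degree y = 2) :
    ∃ P ∈ F, P.1 = x ∨ P.1 = y ∨ P.2.1 = x ∨ P.2.1 = y := by
  obtain ⟨P, hPF, hcase⟩ := hsep x y hxy.ne
  refine ⟨P, hPF, ?_⟩
  rcases hcase with ⟨hxP, hyP⟩ | ⟨hxP, hyP⟩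
  · rcases key_endpoint G P.2.2.1 P.2.2.2 hxP hyP hxy hx with h | h
    · exact Or.inl h.symm
    · exact Or.inr (Or.inr (Or.inl h.symm))
  · rcases key_endpoint G P.2.2.1 P.2.2.2 hyP hxP hxy.symm hy with h | h
    · exact Or.inr (Or.inl h.symm)
    · exact Or.inr (Or.inr (Or.inr h.symm))
end

section
/- Let T be a tree with no vertices of degree 2. Then there is a family of paths of size at most ⌈2h₁(T)/3⌉ that separates and covers E(T), where h₁(T) is the number of leaves of T. -/
open SimpleGraph
open scoped Classical

universe u

variable {V : Type u}

namespace TreeSepAux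

open SimpleGraph Walk

variable {G : SimpleGraph V}

/-- The unique path between two vertices of a tree. -/
noncomputable def pb (hT : G.IsTree) (a b : V) : G.Walk a b :=
  (hT.existsUnique_path a b).exists.choose

lemma pb_isPath (hT : G.IsTree) (a b : V) : (pb hT a b).IsPath :=
  (hT.existsUnique_path a b).exists.choose_spec

lemma pb_eq (hT : G.IsTree) {a b : V} (p : G.Walk a b) (hp : p.IsPath) : p = pb hT a b :=
  (hT.existsUnique_path a b).unique hp (pb_isPath hT a b)

lemma reachable_deleteEdges_of_walk {a b : V} (w : G.Walk a b) (e : Sym2 V)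
    (he : e ∉ w.edges) : (G.deleteEdges {e}).Reachable a b :=
  ⟨w.toDeleteEdges {e} (by intro f hf; simp only [Set.mem_singleton_iff]; rintro rfl; exact he hf)⟩

lemma exists_endpoint_reachable {G : SimpleGraph V} {a b : V} (w : G.Walk a b) (e : Sym2 V)
    (he : e ∈ w.edges) : ∃ t, t ∈ e ∧ (G.deleteEdges {e}).Reachable a t := by
  induction w with
  | nil => simp at he
  | @cons x y z h q ih =>
    rw [Walk.edges_cons, List.mem_cons] at he
    by_cases hxy : s(x, y) = e
    · exact ⟨x, by rw [← hxy]; exact Sym2.mem_mk_left x y, Reachable.refl x⟩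
    · have he' : e ∈ q.edges := he.resolve_left (fun h' => hxy h'.symm)
      obtain ⟨t, ht, hr⟩ := ih he'
      refine ⟨t, ht, Reachable.trans (Adj.reachable ?_) hr⟩
      rw [deleteEdges_adj]
      exact ⟨h, by simpa using hxy⟩

lemma tree_bridge (hT : G.IsTree) {x y : V} (h : G.Adj x y) :
    ¬ (G.deleteEdges {s(x, y)}).Reachable x y := by
  have hb := (isAcyclic_iff_forall_adj_isBridge.mp hT.IsAcyclic) h
  rw [isBridge_iff] at hb
  exact hb

lemma reachable_endpoint (hT : G.IsTree) {x y : V} (h : G.Adj x y) (z : V) :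
    (G.deleteEdges {s(x, y)}).Reachable z x ∨ (G.deleteEdges {s(x, y)}).Reachable z y := by
  obtain ⟨w⟩ := hT.isConnected.preconnected z x
  by_cases he : s(x, y) ∈ w.edges
  · obtain ⟨t, ht, hr⟩ := exists_endpoint_reachable w _ he
    rcases Sym2.mem_iff.mp ht with rfl | rfl
    · exact Or.inl hr
    · exact Or.inr hr
  · exact Or.inl (reachable_deleteEdges_of_walk w _ he)

/-- The far side of the edge `e`, as seen from the root `v0`. -/
def Dside (G : SimpleGraph V) (v0 : V) (e : Sym2 V) : Set V :=
  {x | ¬ (G.deleteEdges {e}).Reachable v0 x}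

lemma not_root_mem_Dside (G : SimpleGraph V) (v0 : V) (e : Sym2 V) :
    v0 ∉ Dside G v0 e := fun h => h (Reachable.refl v0)

lemma Dside_closed {v0 : V} {e : Sym2 V} {x y : V} (hx : x ∈ Dside G v0 e)
    (hr : (G.deleteEdges {e}).Reachable x y) : y ∈ Dside G v0 e :=
  fun h => hx (h.trans hr.symm)

lemma Dside_adj {v0 x y : V} {e : Sym2 V} (hadj : G.Adj x y) (hne : s(x, y) ≠ e)
    (hx : x ∈ Dside G v0 e) : y ∈ Dside G v0 e :=
  Dside_closed hx (Adj.reachable (by rw [deleteEdges_adj]; exact ⟨hadj, by simpa using hne⟩))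

lemma not_reachable_of_mem_edges (hT : G.IsTree) {e : Sym2 V} :
    ∀ {a b : V} (p : G.Walk a b), p.IsPath → e ∈ p.edges →
      ¬ (G.deleteEdges {e}).Reachable a b := by
  intro a b p
  induction p with
  | nil => intro _ h; simp at h
  | @cons x y z h q ih =>
    intro hp hmem hr
    rw [Walk.cons_isPath_iff] at hp
    rw [Walk.edges_cons, List.mem_cons] at hmem
    by_cases hxy : e = s(x, y)
    · subst hxy
      have hq : s(x, y) ∉ q.edges := fun hq => hp.2 (Walk.fst_mem_support_of_mem_edges q hq)
      have hc : (G.deleteEdges {s(x, y)}).Reachable y z := reachable_deleteEdges_of_walk q _ hq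
      exact tree_bridge hT h (hr.trans hc.symm)
    · have hmem' : e ∈ q.edges := hmem.resolve_left (fun h' => hxy h')
      have hadj' : (G.deleteEdges {e}).Adj x y := by
        rw [deleteEdges_adj]
        exact ⟨h, by simp only [Set.mem_singleton_iff]; exact fun hh => hxy hh.symm⟩
      exact ih hp.1 hmem' (hadj'.reachable.symm.trans hr)

lemma mem_edges_iff_not_reachable (hT : G.IsTree) {a b : V} (p : G.Walk a b)
    (hp : p.IsPath) (e : Sym2 V) :
    e ∈ p.edges ↔ ¬ (G.deleteEdges {e}).Reachable a b := by
  constructor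
  · exact not_reachable_of_mem_edges hT p hp
  · intro hr
    by_contra hmem
    exact hr (reachable_deleteEdges_of_walk p e hmem)

lemma reachable_iff_side (hT : G.IsTree) (v0 : V) {e : Sym2 V} (he : e ∈ G.edgeSet) (a b : V) :
    (G.deleteEdges {e}).Reachable a b ↔ (a ∈ Dside G v0 e ↔ b ∈ Dside G v0 e) := by
  induction e with
  | _ x y =>
  have hadj : G.Adj x y := he
  simp only [Dside, Set.mem_setOf_eq]
  constructor
  · intro hr
    constructor
    · intro h hb; exact h (hb.trans hr.symm)
    · intro h ha; exact h (ha.trans hr)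
  · intro hiff
    by_cases hv0a : (G.deleteEdges {s(x, y)}).Reachable v0 a
    · have hv0b : (G.deleteEdges {s(x, y)}).Reachable v0 b := by
        by_contra hnb
        exact hiff.mpr hnb hv0a
      exact hv0a.symm.trans hv0b
    · have hv0b : ¬ (G.deleteEdges {s(x, y)}).Reachable v0 b := hiff.mp hv0a
      rcases reachable_endpoint hT hadj a with h1 | h1 <;>
        rcases reachable_endpoint hT hadj b with h2 | h2 <;>
        rcases reachable_endpoint hT hadj v0 with h0 | h0
      · exact h1.trans h2.symm
      · exact h1.trans h2.symm
      · exact absurd (h0.trans h1.symm) hv0a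
      · exact absurd (h0.trans h2.symm) hv0b
      · exact absurd (h0.trans h2.symm) hv0b
      · exact absurd (h0.trans h1.symm) hv0a
      · exact h1.trans h2.symm
      · exact h1.trans h2.symm

lemma mem_edges_pb_iff (hT : G.IsTree) (v0 : V) {e : Sym2 V} (he : e ∈ G.edgeSet) (a b : V) :
    e ∈ (pb hT a b).edges ↔ ¬ (a ∈ Dside G v0 e ↔ b ∈ Dside G v0 e) := by
  rw [mem_edges_iff_not_reachable hT _ (pb_isPath hT a b), reachable_iff_side hT v0 he]

lemma mem_Dside_iff_mem_edges (hT : G.IsTree) (v0 : V) {e : Sym2 V} (he : e ∈ G.edgeSet)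
    (x : V) : x ∈ Dside G v0 e ↔ e ∈ (pb hT v0 x).edges := by
  rw [mem_edges_pb_iff hT v0 he]
  have h0 : v0 ∉ Dside G v0 e := not_root_mem_Dside G v0 e
  constructor
  · intro hx hiff; exact h0 (hiff.mpr hx)
  · intro h
    by_contra hx
    exact h (by tauto)


lemma exists_endpoint_mem_Dside (hT : G.IsTree) (v0 : V) {e : Sym2 V} (he : e ∈ G.edgeSet) :
    ∃ t ∈ e, t ∈ Dside G v0 e := by
  induction e with
  | _ x y =>
  have hadj : G.Adj x y := he
  rcases reachable_endpoint hT hadj v0 with h | h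
  · exact ⟨y, Sym2.mem_mk_right _ _, fun hr => tree_bridge hT hadj (h.symm.trans hr)⟩
  · exact ⟨x, Sym2.mem_mk_left _ _, fun hr => tree_bridge hT hadj (hr.symm.trans h)⟩

lemma Dside_subset_of_endpoint (hT : G.IsTree) (v0 : V) {e f : Sym2 V}
    (he : e ∈ G.edgeSet) (hf : f ∈ G.edgeSet) (hef : e ≠ f)
    (hend : ∃ t ∈ f, t ∈ Dside G v0 e) : Dside G v0 f ⊆ Dside G v0 e := by
  induction f with
  | _ u v =>
  have hadj : G.Adj u v := hf
  have hne : s(u, v) ≠ e := fun hh => hef hh.symm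
  have hboth : u ∈ Dside G v0 e ∧ v ∈ Dside G v0 e := by
    obtain ⟨t, ht, htD⟩ := hend
    rcases Sym2.mem_iff.mp ht with rfl | rfl
    · exact ⟨htD, Dside_adj hadj hne htD⟩
    · exact ⟨Dside_adj hadj.symm (by rw [Sym2.eq_swap]; exact hne) htD, htD⟩
  intro z hz
  intro hr
  obtain ⟨w⟩ := hr
  by_cases hfw : s(u, v) ∈ w.edges
  · obtain ⟨t', ht', hr'⟩ := exists_endpoint_reachable w s(u, v) hfw
    have hrr : (G.deleteEdges {e}).Reachable v0 t' :=
      hr'.mono (SimpleGraph.deleteEdges_le _)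
    rcases Sym2.mem_iff.mp ht' with rfl | rfl
    · exact hboth.1 hrr
    · exact hboth.2 hrr
  · refine hz ⟨w.transfer (G.deleteEdges {s(u, v)}) ?_⟩
    intro d hd
    have hdG : d ∈ (G.deleteEdges {e}).edgeSet := w.edges_subset_edgeSet hd
    rw [edgeSet_deleteEdges] at hdG ⊢
    exact ⟨hdG.1, by simp only [Set.mem_singleton_iff]; rintro rfl; exact hfw hd⟩

lemma Dside_laminar (hT : G.IsTree) (v0 : V) {e f : Sym2 V}
    (he : e ∈ G.edgeSet) (hf : f ∈ G.edgeSet) (hef : e ≠ f) :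
    Dside G v0 f ⊆ Dside G v0 e ∨ Dside G v0 e ⊆ Dside G v0 f ∨
      Dside G v0 e ∩ Dside G v0 f = ∅ := by
  by_cases h1 : ∃ t ∈ f, t ∈ Dside G v0 e
  · exact Or.inl (Dside_subset_of_endpoint hT v0 he hf hef h1)
  by_cases h2 : ∃ t ∈ e, t ∈ Dside G v0 f
  · exact Or.inr (Or.inl (Dside_subset_of_endpoint hT v0 hf he hef.symm h2))
  refine Or.inr (Or.inr (Set.eq_empty_iff_forall_notMem.mpr ?_))
  rintro z ⟨hze, hzf⟩
  push_neg at h1 h2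
  -- e lies on the path from v0 to z
  have hep : e ∈ (pb hT v0 z).edges := (mem_Dside_iff_mem_edges hT v0 he z).mp hze
  have hep' : e ∈ (pb hT v0 z).reverse.edges := by
    rw [Walk.edges_reverse, List.mem_reverse]; exact hep
  obtain ⟨t, ht, hrt⟩ := exists_endpoint_reachable (pb hT v0 z).reverse e hep'
  -- hrt : (G - e).Reachable z t
  have htf : (G.deleteEdges {f}).Reachable v0 t := by
    by_contra hc
    exact h2 t ht hc
  obtain ⟨W⟩ := hrt
  by_cases hfW : f ∈ W.edges
  · obtain ⟨t₂, ht₂, hr₂⟩ := exists_endpoint_reachable W f hfW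
    have hr₂' : (G.deleteEdges {e}).Reachable z t₂ :=
      hr₂.mono (SimpleGraph.deleteEdges_le _)
    have ht₂e : (G.deleteEdges {e}).Reachable v0 t₂ := by
      by_contra hc
      exact h1 t₂ ht₂ hc
    exact hze (ht₂e.trans hr₂'.symm)
  · have hWf : (G.deleteEdges {f}).Reachable z t := by
      refine ⟨W.transfer _ ?_⟩
      intro d hd
      have hdG : d ∈ (G.deleteEdges {e}).edgeSet := W.edges_subset_edgeSet hd
      rw [edgeSet_deleteEdges] at hdG ⊢
      exact ⟨hdG.1, by simp only [Set.mem_singleton_iff]; rintro rfl; exact hfW hd⟩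
    exact hzf (htf.trans hWf.symm)


lemma exists_concat_of_ne {a b : V} (hab : a ≠ b) (p : G.Walk a b) :
    ∃ (w : V) (q : G.Walk a w) (h : G.Adj w b), p = q.concat h := by
  rcases p with _ | ⟨h, q⟩
  · exact absurd rfl hab
  · exact Walk.exists_cons_eq_concat h q

lemma isPath_concat {a b c : V} {p : G.Walk a b} (hp : p.IsPath) (h : G.Adj b c)
    (hc : c ∉ p.support) : (p.concat h).IsPath := by
  rw [← Walk.isPath_reverse_iff, Walk.reverse_concat, Walk.cons_isPath_iff]
  exact ⟨(Walk.isPath_reverse_iff p).mpr hp, by simpa using hc⟩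

lemma max_neighbors (hT : G.IsTree) {v0 x : V} {S : Set V} (hxS : x ∈ S) (hv0 : v0 ∉ S)
    (hmax : ∀ z ∈ S, (pb hT v0 z).length ≤ (pb hT v0 x).length) :
    ∃ w, G.Adj w x ∧ ∀ y, G.Adj x y →
      (y ∈ S ∨ s(x, y) ∈ (pb hT v0 x).edges) → y = w := by
  have hvx : v0 ≠ x := fun h => hv0 (h ▸ hxS)
  obtain ⟨w, q, hadj, hpq⟩ := exists_concat_of_ne hvx (pb hT v0 x)
  have hqpath : q.IsPath ∧ x ∉ q.support := by
    have hpp := pb_isPath hT v0 x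
    rw [hpq, ← Walk.isPath_reverse_iff, Walk.reverse_concat, Walk.cons_isPath_iff] at hpp
    exact ⟨(Walk.isPath_reverse_iff q).mp hpp.1, by simpa using hpp.2⟩
  refine ⟨w, hadj, ?_⟩
  have hedge : ∀ y, G.Adj x y → s(x, y) ∈ (pb hT v0 x).edges → y = w := by
    intro y hy hmem
    rw [hpq, Walk.edges_concat] at hmem
    rw [List.concat_eq_append, List.mem_append] at hmem
    rcases hmem with hmem | hmem
    · exact absurd (Walk.fst_mem_support_of_mem_edges q hmem) hqpath.2
    · simp only [List.mem_singleton] at hmem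
      rw [Sym2.eq_iff] at hmem
      rcases hmem with ⟨h1, h2⟩ | ⟨h1, h2⟩
      · exact absurd h2.symm hy.ne
      · exact h2
  intro y hy hcase
  rcases hcase with hyS | hmem
  · by_cases hysupp : y ∈ (pb hT v0 x).support
    · -- split the path at y; the last edge is s(y,x)
      have htake := (pb_isPath hT v0 x).takeUntil hysupp
      have hxnotin : x ∉ ((pb hT v0 x).takeUntil y hysupp).support := by
        intro hxin
        have hspec := (pb hT v0 x).take_spec hysupp
        have hnodup := (pb_isPath hT v0 x).support_nodup
        rw [← hspec, Walk.support_append, List.nodup_append] at hnodup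
        have hxdrop : x ∈ ((pb hT v0 x).dropUntil y hysupp).support.tail := by
          have hxend : x ∈ ((pb hT v0 x).dropUntil y hysupp).support :=
            Walk.end_mem_support _
          rw [Walk.support_eq_cons] at hxend
          rcases List.mem_cons.mp hxend with h' | h'
          · exact absurd h' hy.ne
          · exact h'
        exact hnodup.2.2 x hxin x hxdrop rfl
      have hq2 : (((pb hT v0 x).takeUntil y hysupp).concat hy.symm).IsPath :=
        isPath_concat htake hy.symm hxnotin
      have heq := pb_eq hT _ hq2
      have : s(y, x) ∈ (pb hT v0 x).edges := by
        rw [← heq, Walk.edges_concat, List.concat_eq_append, List.mem_append]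
        exact Or.inr (by simp)
      exact hedge y hy (by rwa [Sym2.eq_swap])
    · exfalso
      have hconc := isPath_concat (pb_isPath hT v0 x) hy hysupp
      have heq := pb_eq hT _ hconc
      have hlen := hmax y hyS
      rw [← heq, Walk.length_concat] at hlen
      omega
  · exact hedge y hy hmem

variable [Fintype V]

lemma exists_max_mem (hT : G.IsTree) (v0 : V) {S : Set V} (hSne : S.Nonempty) :
    ∃ x ∈ S, ∀ z ∈ S, (pb hT v0 z).length ≤ (pb hT v0 x).length := by
  obtain ⟨x0, hx0⟩ := hSne
  obtain ⟨x, hx, hmax⟩ := Finset.exists_max_image (Finset.univ.filter (· ∈ S))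
    (fun z => (pb hT v0 z).length) ⟨x0, by simp [hx0]⟩
  exact ⟨x, by simpa using hx, fun z hz => hmax z (by simp [hz])⟩

lemma exists_leaf_Dside (hT : G.IsTree) (v0 : V) {e : Sym2 V} (he : e ∈ G.edgeSet) :
    ∃ x ∈ Dside G v0 e, G.degree x = 1 := by
  have hSne : (Dside G v0 e).Nonempty := by
    obtain ⟨t, _, ht⟩ := exists_endpoint_mem_Dside hT v0 he
    exact ⟨t, ht⟩
  obtain ⟨x, hxS, hmax⟩ := exists_max_mem hT v0 hSne
  obtain ⟨w, hadjw, huniq⟩ := max_neighbors hT hxS (not_root_mem_Dside G v0 e) hmax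
  refine ⟨x, hxS, ?_⟩
  have hsub : G.neighborFinset x ⊆ {w} := by
    intro y hy
    rw [mem_neighborFinset] at hy
    rw [Finset.mem_singleton]
    by_cases hyD : y ∈ Dside G v0 e
    · exact huniq y hy (Or.inl hyD)
    · have hse : s(x, y) = e := by
        by_contra hne'
        exact hyD (Dside_adj hy hne' hxS)
      have hmemp : e ∈ (pb hT v0 x).edges := (mem_Dside_iff_mem_edges hT v0 he x).mp hxS
      exact huniq y hy (Or.inr (by rw [hse]; exact hmemp))
  have hwmem : w ∈ G.neighborFinset x := by rw [mem_neighborFinset]; exact hadjw.symm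
  have h1 : (G.neighborFinset x).card ≤ 1 := by
    calc (G.neighborFinset x).card ≤ ({w} : Finset V).card := Finset.card_le_card hsub
    _ = 1 := Finset.card_singleton w
  have h2 : 1 ≤ (G.neighborFinset x).card := Finset.card_pos.mpr ⟨w, hwmem⟩
  rw [← card_neighborFinset_eq_degree]
  omega

lemma exists_leaf_diff (hT : G.IsTree) (hdeg : ∀ v : V, G.degree v ≠ 2) (v0 : V)
    {e f : Sym2 V} (he : e ∈ G.edgeSet) (hf : f ∈ G.edgeSet)
    (hSne : (Dside G v0 e \ Dside G v0 f).Nonempty) :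
    ∃ x ∈ Dside G v0 e \ Dside G v0 f, G.degree x = 1 := by
  obtain ⟨x, hxS, hmax⟩ := exists_max_mem hT v0 hSne
  have hv0 : v0 ∉ Dside G v0 e \ Dside G v0 f :=
    fun h => not_root_mem_Dside G v0 e h.1
  obtain ⟨w, hadjw, huniq⟩ := max_neighbors hT hxS hv0 hmax
  refine ⟨x, hxS, ?_⟩
  have hwmem : w ∈ G.neighborFinset x := by rw [mem_neighborFinset]; exact hadjw.symm
  have hkey : ∀ y, G.Adj x y → y ∉ Dside G v0 f → y = w := by
    intro y hy hyf
    by_cases hyD : y ∈ Dside G v0 e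
    · exact huniq y hy (Or.inl ⟨hyD, hyf⟩)
    · have hse : s(x, y) = e := by
        by_contra hne'
        exact hyD (Dside_adj hy hne' hxS.1)
      have hmemp : e ∈ (pb hT v0 x).edges := (mem_Dside_iff_mem_edges hT v0 he x).mp hxS.1
      exact huniq y hy (Or.inr (by rw [hse]; exact hmemp))
  have hkey2 : ∀ y, G.Adj x y → y ∈ Dside G v0 f → s(x, y) = f := by
    intro y hy hyf
    by_contra hne'
    exact hxS.2 (Dside_adj hy.symm (by rw [Sym2.eq_swap]; exact hne') hyf)
  by_cases hcross : ∃ y0, G.Adj x y0 ∧ y0 ∈ Dside G v0 f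
  · obtain ⟨y0, hy0a, hy0D⟩ := hcross
    have hsub : G.neighborFinset x ⊆ {w, y0} := by
      intro y hy
      rw [mem_neighborFinset] at hy
      rw [Finset.mem_insert, Finset.mem_singleton]
      by_cases hyf : y ∈ Dside G v0 f
      · right
        have h1 := hkey2 y hy hyf
        have h2 := hkey2 y0 hy0a hy0D
        rw [← h2] at h1
        exact (Sym2.congr_right.mp h1)
      · exact Or.inl (hkey y hy hyf)
    have h1 : (G.neighborFinset x).card ≤ 2 := by
      calc (G.neighborFinset x).card ≤ ({w, y0} : Finset V).card := Finset.card_le_card hsub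
      _ ≤ 2 := Finset.card_insert_le _ _ |>.trans (by simp)
    have h2 : 1 ≤ (G.neighborFinset x).card := Finset.card_pos.mpr ⟨w, hwmem⟩
    have h3 := hdeg x
    rw [← card_neighborFinset_eq_degree] at h3 ⊢
    omega
  · push_neg at hcross
    have hsub : G.neighborFinset x ⊆ {w} := by
      intro y hy
      rw [mem_neighborFinset] at hy
      rw [Finset.mem_singleton]
      exact hkey y hy (hcross y hy)
    have h1 : (G.neighborFinset x).card ≤ 1 := by
      calc (G.neighborFinset x).card ≤ ({w} : Finset V).card := Finset.card_le_card hsub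
      _ = 1 := Finset.card_singleton w
    have h2 : 1 ≤ (G.neighborFinset x).card := Finset.card_pos.mpr ⟨w, hwmem⟩
    rw [← card_neighborFinset_eq_degree]
    omega

/-- Distinct edges are distinguished by some leaf. -/
lemma leaf_separates (hT : G.IsTree) (hdeg : ∀ v : V, G.degree v ≠ 2) (v0 : V)
    {e f : Sym2 V} (he : e ∈ G.edgeSet) (hf : f ∈ G.edgeSet) (hef : e ≠ f) :
    ∃ x, G.degree x = 1 ∧ ((x ∈ Dside G v0 e ∧ x ∉ Dside G v0 f) ∨
      (x ∈ Dside G v0 f ∧ x ∉ Dside G v0 e)) := by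
  have hMne : ∀ {e' f' : Sym2 V}, e' ∈ G.edgeSet → f' ∈ G.edgeSet → e' ≠ f' →
      Dside G v0 f' ⊆ Dside G v0 e' → (Dside G v0 e' \ Dside G v0 f').Nonempty := by
    intro e' f' he' hf' hef' hsub
    -- the near endpoint of f' is in Dside e' \ Dside f'
    induction f' with
    | _ u v =>
    have hadjf : G.Adj u v := hf'
    obtain ⟨t, ht, htD⟩ := exists_endpoint_mem_Dside hT v0 hf'
    -- the other endpoint of f'
    obtain ⟨t', htD', hadj', heqf⟩ :
        ∃ t', t' ∉ Dside G v0 s(u,v) ∧ G.Adj t t' ∧ s(t, t') = s(u, v) := by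
      rcases Sym2.mem_iff.mp ht with rfl | rfl
      · refine ⟨v, fun hv => ?_, hadjf, rfl⟩
        rcases reachable_endpoint hT hadjf v0 with h | h
        · exact htD h
        · exact hv h
      · refine ⟨u, fun hu => ?_, hadjf.symm, Sym2.eq_swap⟩
        rcases reachable_endpoint hT hadjf v0 with h | h
        · exact hu h
        · exact htD h
    refine ⟨t', ⟨?_, htD'⟩⟩
    have hte : t ∈ Dside G v0 e' := hsub htD
    exact Dside_adj hadj' (fun hh => hef' (hh.symm.trans heqf)) hte
  rcases Dside_laminar hT v0 he hf hef with hsub | hsub | hdisj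
  · obtain ⟨x, hx, hdeg1⟩ := exists_leaf_diff hT hdeg v0 he hf (hMne he hf hef hsub)
    exact ⟨x, hdeg1, Or.inl ⟨hx.1, hx.2⟩⟩
  · obtain ⟨x, hx, hdeg1⟩ := exists_leaf_diff hT hdeg v0 hf he (hMne hf he hef.symm hsub)
    exact ⟨x, hdeg1, Or.inr ⟨hx.1, hx.2⟩⟩
  · obtain ⟨x, hx, hdeg1⟩ := exists_leaf_Dside hT v0 he
    exact ⟨x, hdeg1, Or.inl ⟨hx, fun hxf =>
      Set.eq_empty_iff_forall_notMem.mp hdisj x ⟨hx, hxf⟩⟩⟩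


lemma getElem_middle_iff {l1 l2 l3 : List V} (h : (l1 ++ (l2 ++ l3)).Nodup) (i : ℕ)
    (hi : i < (l1 ++ (l2 ++ l3)).length) :
    (l1 ++ (l2 ++ l3))[i] ∈ l2 ↔ (l1.length ≤ i ∧ i < l1.length + l2.length) := by
  rw [List.nodup_append] at h
  by_cases h1 : i < l1.length
  · rw [List.getElem_append_left h1]
    constructor
    · intro hmem
      exact absurd hmem (fun hm => h.2.2 _ (List.getElem_mem h1) _ (List.mem_append_left l3 hm) rfl)
    · omega
  · push_neg at h1
    have hi2 : i - l1.length < (l2 ++ l3).length := by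
      simp only [List.length_append] at hi ⊢; omega
    rw [List.getElem_append_right h1]
    by_cases h2 : i - l1.length < l2.length
    · rw [List.getElem_append_left h2]
      simp only [List.getElem_mem h2, true_iff]
      omega
    · push_neg at h2
      rw [List.getElem_append_right h2]
      have hn2 := h.2.1
      rw [List.nodup_append] at hn2
      constructor
      · intro hmem
        exact absurd hmem (fun hm => hn2.2.2 _ hm _ (List.getElem_mem _) rfl)
      · omega

lemma laminar_interval : ∀ (n : ℕ) (X : Finset V) (Fam : Finset (Finset V)),
    X.card ≤ n →
    (∀ A ∈ Fam, A ⊆ X) →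
    (∀ A ∈ Fam, ∀ B ∈ Fam, A ⊆ B ∨ B ⊆ A ∨ A ∩ B = ∅) →
    ∃ l : List V, l.Nodup ∧ l.toFinset = X ∧
      ∀ A ∈ Fam, ∃ l1 l2 l3 : List V, l = l1 ++ (l2 ++ l3) ∧ l2.toFinset = A := by
  intro n
  induction n with
  | zero =>
    intro X Fam hcard hsub _
    have hX : X = ∅ := Finset.card_eq_zero.mp (Nat.le_antisymm hcard (Nat.zero_le _))
    subst hX
    refine ⟨[], List.nodup_nil, by simp, ?_⟩
    intro A hA
    have : A = ∅ := Finset.subset_empty.mp (hsub A hA)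
    exact ⟨[], [], [], by simp, by simp [this]⟩
  | succ n ih =>
    intro X Fam hcard hsub hlam
    set Fam' := Fam.filter (fun A => A ≠ X ∧ A.Nonempty) with hF'
    by_cases hne : Fam'.Nonempty
    · obtain ⟨A, hA, hAmax⟩ := Finset.exists_max_image Fam' Finset.card hne
      rw [hF', Finset.mem_filter] at hA
      obtain ⟨hAF, hAX, hAne⟩ := hA
      have hAsub : A ⊆ X := hsub A hAF
      have hAlt : A.card < X.card := Finset.card_lt_card (lt_of_le_of_ne hAsub hAX)
      obtain ⟨la, hland, hlafs, hlaint⟩ := ih A (Fam.filter (fun B => B ⊆ A))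
        (by omega)
        (fun B hB => (Finset.mem_filter.mp hB).2)
        (fun B hB C hC => hlam B (Finset.mem_filter.mp hB).1 C (Finset.mem_filter.mp hC).1)
      obtain ⟨lb, hlbnd, hlbfs, hlbint⟩ := ih (X \ A) (Fam.filter (fun B => B ∩ A = ∅))
        (by
          have h1 : (X \ A).card = X.card - A.card := Finset.card_sdiff_of_subset hAsub
          have h2 : 1 ≤ A.card := Finset.card_pos.mpr hAne
          omega)
        (by
          intro B hB
          rw [Finset.mem_filter] at hB
          intro x hx
          rw [Finset.mem_sdiff]
          refine ⟨hsub B hB.1 hx, fun hxA => ?_⟩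
          have : x ∈ B ∩ A := Finset.mem_inter.mpr ⟨hx, hxA⟩
          rw [hB.2] at this
          exact absurd this (Finset.notMem_empty x))
        (fun B hB C hC => hlam B (Finset.mem_filter.mp hB).1 C (Finset.mem_filter.mp hC).1)
      have hdisj : ∀ x ∈ la, x ∉ lb := by
        intro x hxa hxb
        have h1 : x ∈ A := by rw [← hlafs]; exact List.mem_toFinset.mpr hxa
        have h2 : x ∈ X \ A := by rw [← hlbfs]; exact List.mem_toFinset.mpr hxb
        exact (Finset.mem_sdiff.mp h2).2 h1
      refine ⟨la ++ lb, List.Nodup.append hland hlbnd hdisj, ?_, ?_⟩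
      · rw [List.toFinset_append, hlafs, hlbfs]
        exact Finset.union_sdiff_of_subset hAsub
      · intro B hB
        by_cases hBX : B = X
        · exact ⟨[], la ++ lb, [], by simp, by
            rw [List.toFinset_append, hlafs, hlbfs, hBX]
            exact Finset.union_sdiff_of_subset hAsub⟩
        by_cases hBne : B.Nonempty
        · have hBF' : B ∈ Fam' := by
            rw [hF', Finset.mem_filter]; exact ⟨hB, hBX, hBne⟩
          have hcases : B ⊆ A ∨ B ∩ A = ∅ := by
            rcases hlam B hB A hAF with h | h | h
            · exact Or.inl h
            · left
              have hEQ : A = B := Finset.eq_of_subset_of_card_le h (hAmax B hBF')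
              rw [hEQ]
            · exact Or.inr h
          rcases hcases with hc | hc
          · obtain ⟨m1, m2, m3, hsplit, hfs⟩ := hlaint B (Finset.mem_filter.mpr ⟨hB, hc⟩)
            exact ⟨m1, m2, m3 ++ lb, by rw [hsplit]; simp [List.append_assoc], hfs⟩
          · obtain ⟨m1, m2, m3, hsplit, hfs⟩ := hlbint B (Finset.mem_filter.mpr ⟨hB, hc⟩)
            exact ⟨la ++ m1, m2, m3, by rw [hsplit]; simp [List.append_assoc], hfs⟩
        · rw [Finset.not_nonempty_iff_eq_empty] at hBne
          exact ⟨[], [], la ++ lb, by simp, by simp [hBne]⟩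
    · refine ⟨X.toList, Finset.nodup_toList X, by simp, ?_⟩
      intro A hA
      have hAcase : A = X ∨ A = ∅ := by
        by_contra hc
        push_neg at hc
        have : A ∈ Fam' := by
          rw [hF', Finset.mem_filter]
          exact ⟨hA, hc.1, hc.2⟩
        exact hne ⟨A, this⟩
      rcases hAcase with h | h
      · exact ⟨[], X.toList, [], by simp, by simp [h]⟩
      · exact ⟨[], [], X.toList, by simp, by simp [h]⟩


lemma getD_eq_getElem' {α : Type*} [Inhabited α] (l : List α) (d : α) {i : ℕ}
    (h : i < l.length) : l.getD i d = l[i] := by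
  rw [List.getD_eq_getElem?_getD, List.getElem?_eq_getElem h, Option.getD_some]


end TreeSepAux

set_option maxHeartbeats 1000000 in
open TreeSepAux in
theorem stmt6 [Fintype V] (G : SimpleGraph V) (hT : G.IsTree)
    (hdeg : ∀ v : V, G.degree v ≠ 2) :
    ∃ F : Set (PathIn G), F.Finite ∧ EdgeSep G F ∧ EdgeCover G F ∧
      F.ncard ≤ (2 * leafCount G + 2) / 3 := by
  classical
  by_cases hE : G.edgeSet = ∅
  · refine ⟨∅, Set.finite_empty, ?_, ?_, by simp⟩
    · intro e he
      rw [hE] at he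
      exact absurd he (Set.notMem_empty e)
    · intro e he
      rw [hE] at he
      exact absurd he (Set.notMem_empty e)
  · obtain ⟨e0, he0⟩ := Set.nonempty_iff_ne_empty.mpr hE
    have hVne : Nonempty V := hT.isConnected.nonempty
    obtain ⟨z0⟩ := hVne
    obtain ⟨v0, hv0D, hv0deg⟩ := exists_leaf_Dside hT z0 he0
    haveI : Inhabited V := ⟨v0⟩
    set LeafF : Finset V := Finset.univ.filter (fun x => G.degree x = 1) with hLeafF
    have hv0L : v0 ∈ LeafF := by
      rw [hLeafF, Finset.mem_filter]; exact ⟨Finset.mem_univ _, hv0deg⟩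
    have hleafCount : leafCount G = LeafF.card := by
      rw [leafCount, Nat.card_coe_set_eq, Set.ncard_eq_toFinset_card', Set.toFinset_setOf]
    set X : Finset V := LeafF.erase v0 with hX
    set Dleaf : Sym2 V → Finset V :=
      fun e => Finset.univ.filter (fun x => x ∈ Dside G v0 e ∧ G.degree x = 1) with hDleaf
    have hDleaf_mem : ∀ (e : Sym2 V) (x : V),
        x ∈ Dleaf e ↔ (x ∈ Dside G v0 e ∧ G.degree x = 1) := by
      intro e x; rw [hDleaf]; simp
    have hDleafX : ∀ e : Sym2 V, Dleaf e ⊆ X := by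
      intro e x hx
      rw [hDleaf_mem] at hx
      rw [hX, Finset.mem_erase]
      refine ⟨fun h => (not_root_mem_Dside G v0 e) (h ▸ hx.1), ?_⟩
      rw [hLeafF, Finset.mem_filter]; exact ⟨Finset.mem_univ _, hx.2⟩
    have hDleaf_ne : ∀ e ∈ G.edgeSet, (Dleaf e).Nonempty := by
      intro e he
      obtain ⟨x, hx1, hx2⟩ := exists_leaf_Dside hT v0 he
      exact ⟨x, (hDleaf_mem e x).mpr ⟨hx1, hx2⟩⟩
    set Fam : Finset (Finset V) := G.edgeFinset.image Dleaf with hFam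
    have hFam_lam : ∀ A ∈ Fam, ∀ B ∈ Fam, A ⊆ B ∨ B ⊆ A ∨ A ∩ B = ∅ := by
      intro A hA B hB
      rw [hFam, Finset.mem_image] at hA hB
      obtain ⟨e, he, rfl⟩ := hA
      obtain ⟨f, hf, rfl⟩ := hB
      rw [SimpleGraph.mem_edgeFinset] at he hf
      by_cases hef : e = f
      · subst hef; exact Or.inl (Finset.Subset.refl _)
      rcases Dside_laminar hT v0 he hf hef with hsub | hsub | hdisj
      · refine Or.inr (Or.inl ?_)
        intro x hx; rw [hDleaf_mem] at hx ⊢; exact ⟨hsub hx.1, hx.2⟩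
      · refine Or.inl ?_
        intro x hx; rw [hDleaf_mem] at hx ⊢; exact ⟨hsub hx.1, hx.2⟩
      · refine Or.inr (Or.inr ?_)
        rw [Finset.eq_empty_iff_forall_notMem]
        intro x hx
        rw [Finset.mem_inter, hDleaf_mem, hDleaf_mem] at hx
        exact Set.eq_empty_iff_forall_notMem.mp hdisj x ⟨hx.1.1, hx.2.1⟩
    obtain ⟨l, hlnd, hlfs, hlint⟩ := laminar_interval X.card X Fam le_rfl
      (by
        intro A hA
        rw [hFam, Finset.mem_image] at hA
        obtain ⟨e, _, rfl⟩ := hA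
        exact hDleafX e)
      hFam_lam
    set l0 : List V := v0 :: l with hl0
    have hl0nd : l0.Nodup := by
      rw [hl0, List.nodup_cons]
      refine ⟨fun hv => ?_, hlnd⟩
      have : v0 ∈ X := hlfs ▸ List.mem_toFinset.mpr hv
      exact (Finset.mem_erase.mp this).1 rfl
    set n : ℕ := l0.length with hn
    have hlen : l.length = X.card := by rw [← hlfs, List.toFinset_card_of_nodup hlnd]
    have hXcard : X.card = LeafF.card - 1 := by rw [hX]; exact Finset.card_erase_of_mem hv0L
    have hL1 : 1 ≤ LeafF.card := Finset.card_pos.mpr ⟨v0, hv0L⟩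
    have hnLeaf : n = LeafF.card := by
      rw [hn, hl0, List.length_cons, hlen, hXcard]; omega
    have hXne : X.Nonempty := by
      obtain ⟨x, hx⟩ := hDleaf_ne e0 he0
      exact ⟨x, hDleafX e0 hx⟩
    have hn2 : 2 ≤ n := by
      have : 1 ≤ X.card := Finset.card_pos.mpr hXne
      rw [hn, hl0, List.length_cons, hlen]; omega
    have hl0leaf : ∀ x ∈ l0, G.degree x = 1 := by
      intro x hx
      rw [hl0, List.mem_cons] at hx
      rcases hx with rfl | hx
      · exact hv0deg
      · have h1 : x ∈ X := hlfs ▸ List.mem_toFinset.mpr hx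
        have h2 := (Finset.mem_erase.mp h1).2
        rw [hLeafF, Finset.mem_filter] at h2
        exact h2.2
    have hl0fs : l0.toFinset = LeafF := by
      rw [hl0, List.toFinset_cons, hlfs, hX]
      exact Finset.insert_erase hv0L
    -- interval characterization of the sides
    have hchar : ∀ e ∈ G.edgeSet, ∃ a b : ℕ, 1 ≤ a ∧ a < b ∧ b ≤ n ∧
        ∀ i, i < n → (l0.getD i v0 ∈ Dside G v0 e ↔ (a ≤ i ∧ i < b)) := by
      intro e he
      obtain ⟨l1, l2, l3, hsplit, hfs⟩ := hlint (Dleaf e)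
        (by rw [hFam]; exact Finset.mem_image_of_mem _ (SimpleGraph.mem_edgeFinset.mpr he))
      have hl2pos : 1 ≤ l2.length := by
        obtain ⟨x, hx⟩ := hDleaf_ne e he
        rw [← hfs] at hx
        have := List.mem_toFinset.mp hx
        cases l2 with
        | nil => simp at this
        | cons _ _ => simp
      have hl0split : l0 = (v0 :: l1) ++ (l2 ++ l3) := by rw [hl0, hsplit]; simp
      have hlensplit : n = l1.length + 1 + (l2.length + l3.length) := by
        rw [hn, hl0split]
        simp [List.length_append, List.length_cons]
        omega
      refine ⟨l1.length + 1, l1.length + 1 + l2.length, by omega, by omega, by omega, ?_⟩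
      intro i hi
      have hi' : i < ((v0 :: l1) ++ (l2 ++ l3)).length := by
        rw [← hl0split, ← hn]; exact hi
      have hgd : l0.getD i v0 = ((v0 :: l1) ++ (l2 ++ l3))[i] := by
        rw [hl0split] at hl0nd ⊢
        exact getD_eq_getElem' _ _ hi'
      have hnd' : ((v0 :: l1) ++ (l2 ++ l3)).Nodup := by rw [← hl0split]; exact hl0nd
      have hmid := getElem_middle_iff hnd' i hi'
      rw [List.length_cons] at hmid
      rw [hgd]
      constructor
      · intro hmemD
        have hleaf : G.degree (((v0 :: l1) ++ (l2 ++ l3))[i]) = 1 := by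
          apply hl0leaf
          rw [hl0split]
          exact List.getElem_mem hi'
        have : ((v0 :: l1) ++ (l2 ++ l3))[i] ∈ Dleaf e :=
          (hDleaf_mem e _).mpr ⟨hmemD, hleaf⟩
        rw [← hfs] at this
        have := List.mem_toFinset.mp this
        have h2 := hmid.mp this
        omega
      · intro hrange
        have : ((v0 :: l1) ++ (l2 ++ l3))[i] ∈ l2 := hmid.mpr (by omega)
        have h3 : ((v0 :: l1) ++ (l2 ++ l3))[i] ∈ Dleaf e := by
          rw [← hfs]; exact List.mem_toFinset.mpr this
        exact ((hDleaf_mem e _).mp h3).1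
    -- separation witnesses are distinct intervals
    have hsep_witness : ∀ e ∈ G.edgeSet, ∀ f ∈ G.edgeSet, e ≠ f →
        ∃ j, j < n ∧ ¬ (l0.getD j v0 ∈ Dside G v0 e ↔ l0.getD j v0 ∈ Dside G v0 f) := by
      intro e he f hf hef
      obtain ⟨x, hxdeg, hxor⟩ := leaf_separates hT hdeg v0 he hf hef
      have hxl0 : x ∈ l0 := by
        rw [← List.mem_toFinset, hl0fs, hLeafF, Finset.mem_filter]
        exact ⟨Finset.mem_univ _, hxdeg⟩
      have hidx : l0.idxOf x < l0.length := List.idxOf_lt_length_iff.mpr hxl0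
      refine ⟨l0.idxOf x, by rw [hn]; exact hidx, ?_⟩
      have hval : l0.getD (l0.idxOf x) v0 = x := by
        rw [getD_eq_getElem' _ _ hidx]
        exact List.getElem_idxOf hidx
      rw [hval]
      rcases hxor with ⟨h1, h2⟩ | ⟨h1, h2⟩
      · intro hiff; exact h2 (hiff.mp h1)
      · intro hiff; exact h2 (hiff.mpr h1)
    by_cases hn3 : 3 ≤ n
    · -- main construction
      set m : ℕ := n / 3 with hm
      have hm1 : 1 ≤ m := by omega
      have hm3 : 3 * m ≤ n := by omega
      set mkP : ℕ → PathIn G :=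
        fun i => ⟨l0.getD i v0, l0.getD (i + m) v0,
          pb hT (l0.getD i v0) (l0.getD (i + m) v0),
          pb_isPath hT (l0.getD i v0) (l0.getD (i + m) v0)⟩ with hmkP
      have hememP : ∀ e ∈ G.edgeSet, ∀ i : ℕ,
          (PathIn.emem e (mkP i) ↔
            ¬ (l0.getD i v0 ∈ Dside G v0 e ↔ l0.getD (i + m) v0 ∈ Dside G v0 e)) := by
        intro e he i
        rw [hmkP]
        exact mem_edges_pb_iff hT v0 he _ _
      have hcross : ∀ e ∈ G.edgeSet, ∀ a b : ℕ,
          (∀ i, i < n → (l0.getD i v0 ∈ Dside G v0 e ↔ (a ≤ i ∧ i < b))) →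
          ∀ i, i < n - m →
          (PathIn.emem e (mkP i) ↔ ¬ ((a ≤ i ∧ i < b) ↔ (a ≤ i + m ∧ i + m < b))) := by
        intro e he a b hch i hi
        rw [hememP e he i, hch i (by omega), hch (i + m) (by omega)]
      refine ⟨mkP '' Set.Iio (n - m), (Set.finite_Iio (n - m)).image mkP, ?_, ?_, ?_⟩
      · -- EdgeSep
        intro e he f hf hef
        obtain ⟨a, b, ha1, hab, hbn, hche⟩ := hchar e he
        obtain ⟨a', b', ha1', hab', hbn', hchf⟩ := hchar f hf
        by_contra hcon
        push_neg at hcon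
        have hstep : ∀ i, i < n - m →
            (((a ≤ i ∧ i < b) ↔ (a' ≤ i ∧ i < b')) ↔
             ((a ≤ i + m ∧ i + m < b) ↔ (a' ≤ i + m ∧ i + m < b'))) := by
          intro i hi
          have hPF : mkP i ∈ mkP '' Set.Iio (n - m) := ⟨i, hi, rfl⟩
          have hP := hcon (mkP i) hPF
          have h1 := hcross e he a b hche i hi
          have h2 := hcross f hf a' b' hchf i hi
          rw [h1, h2] at hP
          omega
        obtain ⟨j, hjn, hj⟩ := hsep_witness e he f hf hef
        have hgj : ¬ ((a ≤ j ∧ j < b) ↔ (a' ≤ j ∧ j < b')) := by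
          rw [← hche j hjn, ← hchf j hjn]
          exact hj
        have hmod : ∀ j', j' < n →
            (((a ≤ j' ∧ j' < b) ↔ (a' ≤ j' ∧ j' < b')) ↔
             ((a ≤ j' % m ∧ j' % m < b) ↔ (a' ≤ j' % m ∧ j' % m < b'))) := by
          intro j'
          induction j' using Nat.strong_induction_on with
          | _ j' ih =>
            intro hj'
            by_cases hjm : j' < m
            · rw [Nat.mod_eq_of_lt hjm]
            · push_neg at hjm
              have h1 := hstep (j' - m) (by omega)
              have h2 := ih (j' - m) (by omega) (by omega)
              rw [Nat.sub_add_cancel hjm] at h1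
              have h3 : j' % m = (j' - m) % m := Nat.mod_eq_sub_mod hjm
              rw [h3]
              exact h1.symm.trans h2
        set j0 : ℕ := j % m with hj0
        have hgj0 : ¬ ((a ≤ j0 ∧ j0 < b) ↔ (a' ≤ j0 ∧ j0 < b')) := by
          intro hc
          exact hgj ((hmod j hjn).mpr hc)
        have hj0m : j0 < m := by rw [hj0]; exact Nat.mod_lt _ (by omega)
        have hg0 : ((a ≤ 0 ∧ 0 < b) ↔ (a' ≤ 0 ∧ 0 < b')) := by omega
        have hj0pos : 1 ≤ j0 := by
          rcases Nat.eq_zero_or_pos j0 with h | h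
          · exfalso; rw [h] at hgj0; exact hgj0 hg0
          · omega
        have hgm : ((a ≤ m ∧ m < b) ↔ (a' ≤ m ∧ m < b')) := by
          have := (hstep 0 (by omega)).mp (by omega)
          simp only [Nat.zero_add] at this
          exact this
        have hg2m : ((a ≤ 2*m ∧ 2*m < b) ↔ (a' ≤ 2*m ∧ 2*m < b')) := by
          have := (hstep m (by omega)).mp hgm
          have h2 : m + m = 2 * m := by omega
          rw [h2] at this
          exact this
        have hgj0m : ¬ ((a ≤ j0 + m ∧ j0 + m < b) ↔ (a' ≤ j0 + m ∧ j0 + m < b')) := by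
          intro hc
          exact hgj0 ((hstep j0 (by omega)).mpr hc)
        have hgj02m : ¬ ((a ≤ j0 + 2*m ∧ j0 + 2*m < b) ↔ (a' ≤ j0 + 2*m ∧ j0 + 2*m < b')) := by
          intro hc
          apply hgj0m
          apply (hstep (j0 + m) (by omega)).mpr
          have h2 : j0 + m + m = j0 + 2 * m := by omega
          rw [h2]
          exact hc
        omega
      · -- EdgeCover
        intro e he
        obtain ⟨a, b, ha1, hab, hbn, hche⟩ := hchar e he
        have hwit : ∃ i, i < n - m ∧ ¬ ((a ≤ i ∧ i < b) ↔ (a ≤ i + m ∧ i + m < b)) := by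
          by_cases hc1 : a + m ≤ b
          · exact ⟨a - 1, by omega, by omega⟩
          · by_cases hc2 : b + m ≤ n
            · exact ⟨b - 1, by omega, by omega⟩
            · exact ⟨b - 1 - m, by omega, by omega⟩
        obtain ⟨i, hi, hxor⟩ := hwit
        refine ⟨mkP i, ?_, ?_⟩
        · exact ⟨i, hi, rfl⟩
        · exact (hcross e he a b hche i hi).mpr hxor
      · -- cardinality bound
        have h1 : (mkP '' Set.Iio (n - m)).ncard ≤ (Set.Iio (n - m)).ncard :=
          Set.ncard_image_le (Set.finite_Iio _)
        have h2 : (Set.Iio (n - m)).ncard = n - m := by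
          rw [← Finset.coe_range, Set.ncard_coe_finset, Finset.card_range]
        rw [hleafCount, ← hnLeaf]
        omega
    · -- small case : n = 2
      have hn2' : n = 2 := by omega
      have hXone : X.card = 1 := by
        rw [hn, hl0, List.length_cons, hlen] at hn2'
        omega
      obtain ⟨x, hXx⟩ := Finset.card_eq_one.mp hXone
      have hxDside : ∀ f ∈ G.edgeSet, x ∈ Dside G v0 f := by
        intro f hf
        obtain ⟨y, hy⟩ := hDleaf_ne f hf
        have : y ∈ X := hDleafX f hy
        rw [hXx, Finset.mem_singleton] at this
        subst this
        exact ((hDleaf_mem f y).mp hy).1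
      refine ⟨{⟨v0, x, pb hT v0 x, pb_isPath hT v0 x⟩}, Set.finite_singleton _, ?_, ?_, ?_⟩
      · -- EdgeSep : vacuous since there is only one edge
        intro e he f hf hef
        exfalso
        obtain ⟨y, hydeg, hyor⟩ := leaf_separates hT hdeg v0 he hf hef
        have hyv0 : y ≠ v0 := by
          intro hyv
          rcases hyor with ⟨h1, _⟩ | ⟨h1, _⟩ <;> exact not_root_mem_Dside G v0 _ (hyv ▸ h1)
        have hyX : y ∈ X := by
          rw [hX, Finset.mem_erase, hLeafF, Finset.mem_filter]
          exact ⟨hyv0, Finset.mem_univ _, hydeg⟩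
        rw [hXx, Finset.mem_singleton] at hyX
        subst hyX
        rcases hyor with ⟨_, h2⟩ | ⟨_, h2⟩
        · exact h2 (hxDside f hf)
        · exact h2 (hxDside e he)
      · -- EdgeCover
        intro e he
        refine ⟨⟨v0, x, pb hT v0 x, pb_isPath hT v0 x⟩, Set.mem_singleton _, ?_⟩
        have : e ∈ (pb hT v0 x).edges := by
          rw [mem_edges_pb_iff hT v0 he]
          intro hiff
          exact not_root_mem_Dside G v0 e (hiff.mpr (hxDside e he))
        exact this
      · refine (Set.ncard_singleton (α := PathIn G) _).le.trans ?_; rw [hleafCount]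
        omega
end

section
/- Let T be a tree on at least 4 vertices in which every vertex has degree 1 or 3. Then every family of paths in T that separates and covers V(T) ∪ E*(T) has size at least h₁(T), the number of leaves of T. -/
open SimpleGraph
open scoped Classical

universe u

variable {V : Type u}

set_option linter.unusedSectionVars false
set_option maxHeartbeats 1000000

namespace Stmt9Aux
variable {G : SimpleGraph V}


lemma mem_support_of_mem_edges' {a b v : V} {p : G.Walk a b} {e : Sym2 V}
    (he : e ∈ p.edges) (hv : v ∈ e) : v ∈ p.support := by
  obtain ⟨z, rfl⟩ := Sym2.mem_iff_exists.mp hv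
  exact p.fst_mem_support_of_mem_edges he

lemma edge_at_start_unique {a b : V} {p : G.Walk a b} (hp : p.IsPath)
    {e f : Sym2 V} (he : e ∈ p.edges) (hf : f ∈ p.edges) (hae : a ∈ e) (haf : a ∈ f) :
    e = f := by
  cases p with
  | nil => simp at he
  | cons h q =>
    rw [SimpleGraph.Walk.cons_isPath_iff] at hp
    rw [SimpleGraph.Walk.edges_cons, List.mem_cons] at he hf
    rcases he with rfl | he
    · rcases hf with rfl | hf
      · rfl
      · exact absurd (mem_support_of_mem_edges' hf haf) hp.2
    · exact absurd (mem_support_of_mem_edges' he hae) hp.2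

lemma edge_at_endpoint_unique {a b v : V} {p : G.Walk a b} (hp : p.IsPath)
    (hv : v = a ∨ v = b)
    {e f : Sym2 V} (he : e ∈ p.edges) (hf : f ∈ p.edges) (hae : v ∈ e) (haf : v ∈ f) :
    e = f := by
  rcases hv with rfl | rfl
  · exact edge_at_start_unique hp he hf hae haf
  · have hp' := (p.isPath_reverse_iff).mpr hp
    have he' : e ∈ p.reverse.edges := by rw [SimpleGraph.Walk.edges_reverse, List.mem_reverse]; exact he
    have hf' : f ∈ p.reverse.edges := by rw [SimpleGraph.Walk.edges_reverse, List.mem_reverse]; exact hf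
    exact edge_at_start_unique hp' he' hf' hae haf

lemma no_three_edges {a b : V} {p : G.Walk a b} (hp : p.IsPath) {v : V}
    {e1 e2 e3 : Sym2 V} (h1 : e1 ∈ p.edges) (h2 : e2 ∈ p.edges) (h3 : e3 ∈ p.edges)
    (h12 : e1 ≠ e2) (h13 : e1 ≠ e3) (h23 : e2 ≠ e3)
    (hv1 : v ∈ e1) (hv2 : v ∈ e2) (hv3 : v ∈ e3) : False := by
  induction p with
  | nil => simp at h1
  | @cons s x t h q ih =>
    rw [SimpleGraph.Walk.cons_isPath_iff] at hp
    rw [SimpleGraph.Walk.edges_cons, List.mem_cons] at h1 h2 h3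
    have sub : ∀ f g : Sym2 V, f ∈ q.edges → g ∈ q.edges → f ≠ g →
        v ∈ s(s, x) → v ∈ f → v ∈ g → False := by
      intro f g hfq hgq hfg hvsx hvf hvg
      rw [Sym2.mem_iff] at hvsx
      rcases hvsx with rfl | rfl
      · exact hp.2 (mem_support_of_mem_edges' hfq hvf)
      · exact hfg (edge_at_start_unique hp.1 hfq hgq hvf hvg)
    rcases h1 with rfl | h1
    · rcases h2 with rfl | h2
      · exact h12 rfl
      · rcases h3 with rfl | h3
        · exact h13 rfl
        · exact sub _ _ h2 h3 h23 hv1 hv2 hv3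
    · rcases h2 with rfl | h2
      · rcases h3 with rfl | h3
        · exact h23 rfl
        · exact sub _ _ h1 h3 h13 hv2 hv1 hv3
      · rcases h3 with rfl | h3
        · exact sub _ _ h1 h2 h12 hv3 hv1 hv2
        · exact ih hp.1 h1 h2 h3

lemma two_edges_of_internal {a b v : V} {p : G.Walk a b} (hp : p.IsPath)
    (hv : v ∈ p.support) (hva : v ≠ a) (hvb : v ≠ b) :
    ∃ e ∈ p.edges, ∃ f ∈ p.edges, e ≠ f ∧ v ∈ e ∧ v ∈ f := by
  induction p with
  | nil => simp at hv; exact absurd hv hva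
  | @cons s x t h q ih =>
    rw [SimpleGraph.Walk.cons_isPath_iff] at hp
    rw [SimpleGraph.Walk.support_cons, List.mem_cons] at hv
    rcases hv with rfl | hv
    · exact absurd rfl hva
    · by_cases hvx : v = x
      · subst hvx
        cases q with
        | nil => exact absurd rfl hvb
        | @cons x' y t h' q' =>
          refine ⟨s(s, v), by simp, s(v, y), by simp, ?_, by simp, by simp⟩
          intro hh
          rw [Sym2.eq_iff] at hh
          rcases hh with ⟨rfl, rfl⟩ | ⟨rfl, -⟩
          · exact G.loopless.irrefl _ h
          · exact hp.2 (by simp [SimpleGraph.Walk.support_cons])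
      · obtain ⟨e, he, f, hf, hef, hve, hvf⟩ := ih hp.1 hv hvx hvb
        exact ⟨e, by simp [he], f, by simp [hf], hef, hve, hvf⟩

lemma exists_edge_of_start {a b : V} (p : G.Walk a b) (hab : a ≠ b) :
    ∃ z, G.Adj a z ∧ s(a, z) ∈ p.edges := by
  cases p with
  | nil => exact absurd rfl hab
  | cons h q => exact ⟨_, h, by simp⟩

lemma exists_edge_of_endpoint {a b v : V} (p : G.Walk a b) (hv : v = a ∨ v = b)
    (hab : a ≠ b) : ∃ z, G.Adj v z ∧ s(v, z) ∈ p.edges := by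
  rcases hv with rfl | rfl
  · exact exists_edge_of_start p hab
  · obtain ⟨z, hz, he⟩ := exists_edge_of_start p.reverse (Ne.symm hab)
    refine ⟨z, hz, ?_⟩
    rwa [SimpleGraph.Walk.edges_reverse, List.mem_reverse] at he

lemma support_eq_of_loop {a : V} {p : G.Walk a a} (hp : p.IsPath) :
    p.support = [a] := by
  cases p with
  | nil => simp
  | cons h q =>
    rw [SimpleGraph.Walk.cons_isPath_iff] at hp
    exact absurd q.end_mem_support hp.2


variable {G : SimpleGraph V}


/-- P contains v iff v in support; endpoint predicate -/
def EndsAt (P : PathIn G) (v : V) : Prop := P.1 = v ∨ P.2.1 = v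

lemma vmem_of_endsAt {P : PathIn G} {v : V} (h : EndsAt P v) : P.vmem v := by
  rcases h with rfl | rfl
  · exact P.2.2.1.start_mem_support
  · exact P.2.2.1.end_mem_support

lemma vmem_of_emem {P : PathIn G} {e : Sym2 V} {v : V} (he : P.emem e) (hv : v ∈ e) :
    P.vmem v := mem_support_of_mem_edges' he hv

section deg
variable [Fintype V]

lemma leaf_endsAt {u : V} (hu : G.degree u = 1) {P : PathIn G} (h : P.vmem u) :
    EndsAt P u := by
  by_contra hc
  rw [EndsAt, not_or] at hc
  obtain ⟨e, he, f, hf, hef, hue, huf⟩ :=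
    two_edges_of_internal P.2.2.2 h (fun hh => hc.1 hh.symm) (fun hh => hc.2 hh.symm)
  obtain ⟨z1, rfl⟩ := Sym2.mem_iff_exists.mp hue
  obtain ⟨z2, rfl⟩ := Sym2.mem_iff_exists.mp huf
  have hz1 : z1 ∈ G.neighborFinset u := by
    rw [SimpleGraph.mem_neighborFinset]
    exact P.2.2.1.edges_subset_edgeSet he
  have hz2 : z2 ∈ G.neighborFinset u := by
    rw [SimpleGraph.mem_neighborFinset]
    exact P.2.2.1.edges_subset_edgeSet hf
  have hzz : z1 ≠ z2 := fun hh => hef (by rw [hh])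
  have : ({z1, z2} : Finset V) ⊆ G.neighborFinset u := by
    intro z hz; rcases Finset.mem_insert.mp hz with rfl | hz
    · exact hz1
    · rwa [Finset.mem_singleton.mp hz]
  have h2 := Finset.card_le_card this
  rw [Finset.card_pair hzz, G.card_neighborFinset_eq_degree, hu] at h2
  omega

lemma leaf_pendant {u w : V} (hu : G.degree u = 1) (hw : G.neighborFinset u = {w})
    {P : PathIn G} (h : P.vmem u) (hne : P.1 ≠ P.2.1) : P.emem s(u, w) := by
  have hend := leaf_endsAt hu h
  obtain ⟨z, hz, he⟩ := exists_edge_of_endpoint P.2.2.1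
    (by rcases hend with h' | h' <;> [exact Or.inl h'.symm; exact Or.inr h'.symm]) hne
  have : z ∈ G.neighborFinset u := by rwa [SimpleGraph.mem_neighborFinset]
  rw [hw, Finset.mem_singleton] at this
  subst this
  exact he

lemma vmem_loop {P : PathIn G} {v : V} (h : P.vmem v) (hh : P.1 = P.2.1) : v = P.1 := by
  obtain ⟨a, b, p, hp⟩ := P
  simp only [PathIn.vmem] at h
  simp only at hh
  subst hh
  rw [support_eq_of_loop hp] at h
  simpa using h

lemma nontriv_of_vmem_ne {P : PathIn G} {v : V} (h : P.vmem v) (hv : v ≠ P.1) :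
    P.1 ≠ P.2.1 := fun hh => hv (vmem_loop h hh)

end deg

variable {G : SimpleGraph V}


noncomputable def endAt (P : PathIn G) (v : V) : ℕ :=
  (if P.1 = v then 1 else 0) + (if P.2.1 = v then 1 else 0)

lemma endAt_le_two (P : PathIn G) (v : V) : endAt P v ≤ 2 := by
  unfold endAt; split <;> split <;> omega

lemma one_le_endAt {P : PathIn G} {v : V} (h : EndsAt P v) : 1 ≤ endAt P v := by
  unfold endAt; rcases h with h | h <;> simp [h] <;> omega

lemma endAt_eq_two {P : PathIn G} {v : V} (h1 : P.1 = v) (h2 : P.2.1 = v) :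
    endAt P v = 2 := by unfold endAt; simp [h1, h2]

section FF
variable (F : Set (PathIn G)) (hF : F.Finite)

noncomputable def dC (v : V) : ℕ := ∑ P ∈ hF.toFinset, endAt P v

variable {F}

lemma one_le_dC {P : PathIn G} {v : V} (hP : P ∈ F) (h : EndsAt P v) : 1 ≤ dC F hF v := by
  calc 1 ≤ endAt P v := one_le_endAt h
  _ ≤ _ := Finset.single_le_sum (f := fun P => endAt P v)
      (fun _ _ => Nat.zero_le _) (hF.mem_toFinset.mpr hP)

lemma two_le_dC_of_ne {P Q : PathIn G} {v : V} (hP : P ∈ F) (hQ : Q ∈ F) (hne : P ≠ Q)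
    (h1 : EndsAt P v) (h2 : EndsAt Q v) : 2 ≤ dC F hF v := by
  have hsub : ({P, Q} : Finset (PathIn G)) ⊆ hF.toFinset := by
    intro R hR
    rcases Finset.mem_insert.mp hR with rfl | hR
    · exact hF.mem_toFinset.mpr hP
    · exact hF.mem_toFinset.mpr (Finset.mem_singleton.mp hR ▸ hQ)
  calc (2 : ℕ) ≤ endAt P v + endAt Q v := by
        have := one_le_endAt h1; have := one_le_endAt h2; omega
  _ = ∑ R ∈ ({P, Q} : Finset (PathIn G)), endAt R v := (Finset.sum_pair (f := fun R => endAt R v) hne).symm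
  _ ≤ _ := Finset.sum_le_sum_of_subset hsub

lemma two_le_dC_of_loop {P : PathIn G} {v : V} (hP : P ∈ F) (h1 : P.1 = v) (h2 : P.2.1 = v) :
    2 ≤ dC F hF v := by
  calc 2 = endAt P v := (endAt_eq_two h1 h2).symm
  _ ≤ _ := Finset.single_le_sum (f := fun P => endAt P v)
      (fun _ _ => Nat.zero_le _) (hF.mem_toFinset.mpr hP)

lemma three_le_dC_of_loop {P Q : PathIn G} {v : V} (hP : P ∈ F) (hQ : Q ∈ F) (hne : P ≠ Q)
    (h1 : EndsAt P v) (h2 : Q.1 = v) (h3 : Q.2.1 = v) : 3 ≤ dC F hF v := by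
  have hsub : ({P, Q} : Finset (PathIn G)) ⊆ hF.toFinset := by
    intro R hR
    rcases Finset.mem_insert.mp hR with rfl | hR
    · exact hF.mem_toFinset.mpr hP
    · exact hF.mem_toFinset.mpr (Finset.mem_singleton.mp hR ▸ hQ)
  calc (3 : ℕ) ≤ endAt P v + endAt Q v := by
        have := one_le_endAt h1; have h4 := endAt_eq_two h2 h3; omega
  _ = ∑ R ∈ ({P, Q} : Finset (PathIn G)), endAt R v := (Finset.sum_pair (f := fun R => endAt R v) hne).symm
  _ ≤ _ := Finset.sum_le_sum_of_subset hsub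

lemma sum_dC [Fintype V] : ∑ v, dC F hF v = 2 * hF.toFinset.card := by
  unfold dC
  rw [Finset.sum_comm]
  have h2 : ∀ P ∈ hF.toFinset, ∑ v : V, endAt P v = 2 := by
    intro P _
    unfold endAt
    rw [Finset.sum_add_distrib]
    simp
  rw [Finset.sum_congr rfl h2, Finset.sum_const, smul_eq_mul, mul_comm]
end FF

section Sep
variable [Fintype V] {F : Set (PathIn G)}
  (hsep : Separates G ((Sum.inl '' Set.univ) ∪ (Sum.inr '' interiorEdgeSet G)) F)

lemma sepVV (hsep : Separates G ((Sum.inl '' Set.univ) ∪ (Sum.inr '' interiorEdgeSet G)) F)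
    {v v' : V} (h : v ≠ v') : ∃ P ∈ F,
    (P.vmem v ∧ ¬ P.vmem v') ∨ (¬ P.vmem v ∧ P.vmem v') := by
  have := hsep (Sum.inl v) (by left; exact ⟨v, trivial, rfl⟩)
    (Sum.inl v') (by left; exact ⟨v', trivial, rfl⟩) (by simpa using h)
  simpa [ElemMem] using this

lemma sepEV (hsep : Separates G ((Sum.inl '' Set.univ) ∪ (Sum.inr '' interiorEdgeSet G)) F)
    {e : Sym2 V} (he : e ∈ interiorEdgeSet G) (v : V) : ∃ P ∈ F,
    (P.emem e ∧ ¬ P.vmem v) ∨ (¬ P.emem e ∧ P.vmem v) := by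
  have := hsep (Sum.inr e) (by right; exact ⟨e, he, rfl⟩)
    (Sum.inl v) (by left; exact ⟨v, trivial, rfl⟩) (by simp)
  simpa [ElemMem] using this

lemma covV (hcov : Covers G ((Sum.inl '' Set.univ) ∪ (Sum.inr '' interiorEdgeSet G)) F)
    (v : V) : ∃ P ∈ F, P.vmem v := by
  have := hcov (Sum.inl v) (by left; exact ⟨v, trivial, rfl⟩)
  simpa [ElemMem] using this

end Sep

section Local
variable [Fintype V] {F : Set (PathIn G)} (hF : F.Finite)

lemma sym2_ne {w a b : V} (h : a ≠ b) : s(w, a) ≠ s(w, b) := by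
  intro hh
  rcases Sym2.eq_iff.mp hh with ⟨-, h2⟩ | ⟨h1, h2⟩
  · exact h h2
  · exact h (h2.trans h1)

lemma mem_sym2_left (w z : V) : w ∈ s(w, z) := Sym2.mem_iff.mpr (Or.inl rfl)
lemma mem_sym2_right (w z : V) : z ∈ s(w, z) := Sym2.mem_iff.mpr (Or.inr rfl)

lemma edge_at {w u1 u2 x : V} (hnb : G.neighborFinset w = {u1, u2, x}) {e : Sym2 V}
    (he : e ∈ G.edgeSet) (hwe : w ∈ e) :
    e = s(w, u1) ∨ e = s(w, u2) ∨ e = s(w, x) := by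
  obtain ⟨z, rfl⟩ := Sym2.mem_iff_exists.mp hwe
  have hz : z ∈ G.neighborFinset w := by
    rw [SimpleGraph.mem_neighborFinset]
    exact G.mem_edgeSet.mp he
  rw [hnb] at hz
  rcases Finset.mem_insert.mp hz with rfl | hz
  · exact Or.inl rfl
  rcases Finset.mem_insert.mp hz with rfl | hz
  · exact Or.inr (Or.inl rfl)
  · exact Or.inr (Or.inr (by rw [Finset.mem_singleton.mp hz]))

lemma adj_of_nbr {w z : V} {s : Finset V} (hnb : G.neighborFinset w = s) (hz : z ∈ s) :
    G.Adj w z := by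
  rw [← hnb, SimpleGraph.mem_neighborFinset] at hz; exact hz

lemma pass_through {w u1 u2 x : V} (hnb : G.neighborFinset w = {u1, u2, x})
    (h12 : u1 ≠ u2) (h13 : u1 ≠ x) (h23 : u2 ≠ x)
    {P : PathIn G} (hp : P.vmem w) (hne : ¬ EndsAt P w) :
    (P.emem s(w, u1) ∧ P.emem s(w, u2)) ∨ (P.emem s(w, u1) ∧ P.emem s(w, x)) ∨
      (P.emem s(w, u2) ∧ P.emem s(w, x)) := by
  rw [EndsAt, not_or] at hne
  obtain ⟨e, he, f, hf, hef, hwe, hwf⟩ :=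
    two_edges_of_internal P.2.2.2 hp (fun hh => hne.1 hh.symm) (fun hh => hne.2 hh.symm)
  have ce := edge_at hnb (P.2.2.1.edges_subset_edgeSet he) hwe
  have cf := edge_at hnb (P.2.2.1.edges_subset_edgeSet hf) hwf
  have he' : P.emem e := he
  have hf' : P.emem f := hf
  rcases ce with h | h | h <;> rcases cf with h' | h' | h' <;>
    rw [h] at he' hef <;> rw [h'] at hf' hef <;> tauto

lemma end_edge {w u1 u2 x : V} (hnb : G.neighborFinset w = {u1, u2, x})
    {P : PathIn G} (hend : EndsAt P w) (hne : P.1 ≠ P.2.1) :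
    P.emem s(w, u1) ∨ P.emem s(w, u2) ∨ P.emem s(w, x) := by
  obtain ⟨z, hz, he⟩ := exists_edge_of_endpoint P.2.2.1
    (by rcases hend with h | h <;> [exact Or.inl h.symm; exact Or.inr h.symm]) hne
  have := edge_at hnb (G.mem_edgeSet.mpr hz) (mem_sym2_left w z)
  rcases this with h | h | h
  · exact Or.inl (h ▸ he)
  · exact Or.inr (Or.inl (h ▸ he))
  · exact Or.inr (Or.inr (h ▸ he))

lemma nbrFinset_of_leaf {u w : V} (hu : G.degree u = 1) (hadj : G.Adj u w) :
    G.neighborFinset u = {w} := by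
  have hw : w ∈ G.neighborFinset u := (SimpleGraph.mem_neighborFinset _ _ _).mpr hadj
  rw [← SimpleGraph.card_neighborFinset_eq_degree] at hu
  obtain ⟨z, hz⟩ := Finset.card_eq_one.mp hu
  rw [hz] at hw ⊢
  rw [Finset.mem_singleton.mp hw]

lemma lonely (hcov : Covers G ((Sum.inl '' Set.univ) ∪ (Sum.inr '' interiorEdgeSet G)) F)
    {u : V} (hu : G.degree u = 1) (hd : dC F hF u = 1) :
    ∃ P ∈ F, EndsAt P u ∧ P.1 ≠ P.2.1 ∧ ∀ Q ∈ F, PathIn.vmem u Q → Q = P := by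
  obtain ⟨P, hPF, hPu⟩ := covV hcov u
  have hend := leaf_endsAt hu hPu
  refine ⟨P, hPF, hend, ?_, ?_⟩
  · intro hh
    have h1 : P.1 = u := by
      rcases hend with h | h
      · exact h
      · exact hh.trans h
    have := two_le_dC_of_loop hF hPF h1 (hh ▸ h1)
    omega
  · intro Q hQF hQu
    by_contra hne
    have := two_le_dC_of_ne hF hQF hPF hne (leaf_endsAt hu hQu) hend
    omega

lemma S1 (hsep : Separates G ((Sum.inl '' Set.univ) ∪ (Sum.inr '' interiorEdgeSet G)) F)
    (hcov : Covers G ((Sum.inl '' Set.univ) ∪ (Sum.inr '' interiorEdgeSet G)) F)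
    {w u x y : V} (hnb : G.neighborFinset w = {u, x, y})
    (hu : G.degree u = 1) (hw : G.degree w ≠ 1) (hx : G.degree x ≠ 1) (hy : G.degree y ≠ 1)
    (hux : u ≠ x) (huy : u ≠ y) (hxy : x ≠ y)
    (hd : dC F hF u = 1) : 1 ≤ dC F hF w := by
  obtain ⟨P, hPF, hPu, hPnt, huniq⟩ := lonely hF hcov hu hd
  have hwu : G.Adj w u := adj_of_nbr hnb (by simp)
  have pe : P.emem s(w, u) := by
    rw [Sym2.eq_swap]
    exact leaf_pendant hu (nbrFinset_of_leaf hu hwu.symm) (vmem_of_endsAt hPu) hPnt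
  have hPw : P.vmem w := vmem_of_emem pe (mem_sym2_left w u)
  by_cases hEw : EndsAt P w
  · exact one_le_dC hF hPF hEw
  -- inner symmetric lemma
  have inner : ∀ x' y' : V, G.neighborFinset w = {u, x', y'} → G.degree x' ≠ 1 →
      u ≠ x' → u ≠ y' → x' ≠ y' →
      P.emem s(w, x') → ¬ P.emem s(w, y') → 1 ≤ dC F hF w := by
    intro x' y' hnb' hx' hux' huy' hxy' ha hb
    have hwx : G.Adj w x' := adj_of_nbr hnb' (by simp)
    have hint : s(w, x') ∈ interiorEdgeSet G := by
      refine ⟨G.mem_edgeSet.mpr hwx, ?_⟩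
      intro z hz
      rcases Sym2.mem_iff.mp hz with rfl | rfl
      · exact hw
      · exact hx'
    obtain ⟨Q, hQF, hQ⟩ := sepEV hsep hint w
    rcases hQ with ⟨hQa, hQw⟩ | ⟨hQa, hQw⟩
    · exact absurd (vmem_of_emem hQa (mem_sym2_left w x')) hQw
    · by_cases hEQ : EndsAt Q w
      · exact one_le_dC hF hQF hEQ
      · rcases pass_through hnb' hux' huy' hxy' hQw hEQ with ⟨h1, h2⟩ | ⟨h1, h2⟩ | ⟨h1, h2⟩
        · exact absurd h2 hQa
        · have hQP : Q = P := huniq Q hQF (vmem_of_emem h1 (mem_sym2_right w u))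
          exact absurd (hQP ▸ h2) hb
        · exact absurd h1 hQa
  rcases pass_through hnb hux huy hxy hPw hEw with ⟨h1, h2⟩ | ⟨h1, h2⟩ | ⟨h1, h2⟩
  · -- edges s(w,u), s(w,x) in P; show s(w,y) not
    have hb : ¬ P.emem s(w, y) := by
      intro h3
      exact no_three_edges P.2.2.2 h1 h2 h3 (sym2_ne hux) (sym2_ne huy) (sym2_ne hxy)
        (mem_sym2_left w u) (mem_sym2_left w x) (mem_sym2_left w y)
    exact inner x y hnb hx hux huy hxy h2 hb
  · have hb : ¬ P.emem s(w, x) := by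
      intro h3
      exact no_three_edges P.2.2.2 h1 h3 h2 (sym2_ne hux) (sym2_ne huy) (sym2_ne hxy)
        (mem_sym2_left w u) (mem_sym2_left w x) (mem_sym2_left w y)
    have hnb2 : G.neighborFinset w = {u, y, x} := by
      rw [hnb]; ext z; simp; tauto
    exact inner y x hnb2 hy huy hux (Ne.symm hxy) h2 hb
  · exact absurd (by
      exact no_three_edges P.2.2.2 pe h1 h2 (sym2_ne hux) (sym2_ne huy) (sym2_ne hxy)
        (mem_sym2_left w u) (mem_sym2_left w x) (mem_sym2_left w y)) not_false

lemma one_le_dC_leaf (hcov : Covers G ((Sum.inl '' Set.univ) ∪ (Sum.inr '' interiorEdgeSet G)) F)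
    {u : V} (hu : G.degree u = 1) : 1 ≤ dC F hF u := by
  obtain ⟨P, hPF, hPu⟩ := covV hcov u
  exact one_le_dC hF hPF (leaf_endsAt hu hPu)

lemma bigS (hsep : Separates G ((Sum.inl '' Set.univ) ∪ (Sum.inr '' interiorEdgeSet G)) F)
    (hcov : Covers G ((Sum.inl '' Set.univ) ∪ (Sum.inr '' interiorEdgeSet G)) F)
    {w u1 u2 x : V} (hnb : G.neighborFinset w = {u1, u2, x})
    (hu1 : G.degree u1 = 1) (hu2 : G.degree u2 = 1) (hw : G.degree w ≠ 1)
    (hx : G.degree x ≠ 1) (h12 : u1 ≠ u2) (h1x : u1 ≠ x) (h2x : u2 ≠ x)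
    (hd1 : dC F hF u1 = 1) : 3 ≤ dC F hF w + dC F hF u2 := by
  have hadj1 : G.Adj w u1 := adj_of_nbr hnb (by simp)
  have hadj2 : G.Adj w u2 := adj_of_nbr hnb (by simp)
  have hadjx : G.Adj w x := adj_of_nbr hnb (by simp)
  have hint : s(w, x) ∈ interiorEdgeSet G := by
    refine ⟨G.mem_edgeSet.mpr hadjx, ?_⟩
    intro z hz
    rcases Sym2.mem_iff.mp hz with rfl | rfl
    · exact hw
    · exact hx
  obtain ⟨P1, hP1F, hP1u, hP1nt, huniq1⟩ := lonely hF hcov hu1 hd1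
  have pe1 : P1.emem s(w, u1) := by
    rw [Sym2.eq_swap]
    exact leaf_pendant hu1 (nbrFinset_of_leaf hu1 hadj1.symm) (vmem_of_endsAt hP1u) hP1nt
  have hP1w : P1.vmem w := vmem_of_emem pe1 (mem_sym2_left w u1)
  have hP1u1 : P1.vmem u1 := vmem_of_endsAt hP1u
  have hd2low : 1 ≤ dC F hF u2 := one_le_dC_leaf hF hcov hu2
  by_cases hc : P1.vmem u2
  · -- Case I
    have hP1u2end : EndsAt P1 u2 := leaf_endsAt hu2 hc
    have pe2 : P1.emem s(w, u2) := by
      rw [Sym2.eq_swap]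
      exact leaf_pendant hu2 (nbrFinset_of_leaf hu2 hadj2.symm) hc hP1nt
    have hax : ¬ P1.emem s(w, x) := fun h3 =>
      no_three_edges P1.2.2.2 pe1 pe2 h3 (sym2_ne h12) (sym2_ne h1x) (sym2_ne h2x)
        (mem_sym2_left w u1) (mem_sym2_left w u2) (mem_sym2_left w x)
    obtain ⟨Q, hQF, hQ⟩ := sepVV hsep h12
    have hQgood : Q.vmem u2 ∧ ¬ Q.vmem u1 := by
      rcases hQ with ⟨hQ1, hQ2⟩ | ⟨hQ1, hQ2⟩
      · exact absurd ((huniq1 Q hQF hQ1) ▸ hc) hQ2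
      · exact ⟨hQ2, hQ1⟩
    have hQP1 : Q ≠ P1 := fun hh => hQgood.2 (hh ▸ hP1u1)
    have hdu2 : 2 ≤ dC F hF u2 :=
      two_le_dC_of_ne hF hP1F hQF (Ne.symm hQP1) hP1u2end (leaf_endsAt hu2 hQgood.1)
    obtain ⟨Q', hQ'F, hQ'⟩ := sepVV hsep hadj2.ne
    rcases hQ' with ⟨hQ'w, hQ'u2⟩ | ⟨hQ'w, hQ'u2⟩
    · by_cases hEQ' : EndsAt Q' w
      · have := one_le_dC hF hQ'F hEQ'
        omega
      · rcases pass_through hnb h12 h1x h2x hQ'w hEQ' with ⟨h1, h2⟩ | ⟨h1, h2⟩ | ⟨h1, h2⟩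
        · exact absurd (vmem_of_emem h2 (mem_sym2_right w u2)) hQ'u2
        · have hh : Q' = P1 := huniq1 Q' hQ'F (vmem_of_emem h1 (mem_sym2_right w u1))
          exact absurd (hh ▸ h2) hax
        · exact absurd (vmem_of_emem h1 (mem_sym2_right w u2)) hQ'u2
    · -- Q' contains u2 but not w : must be trivial loop at u2
      have hQ'loop : Q'.1 = Q'.2.1 := by
        by_contra hne
        exact hQ'w (vmem_of_emem
          (by rw [Sym2.eq_swap]
              exact leaf_pendant hu2 (nbrFinset_of_leaf hu2 hadj2.symm) hQ'u2 hne)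
          (mem_sym2_left w u2))
      have h1 : u2 = Q'.1 := vmem_loop hQ'u2 hQ'loop
      have hQ'P1 : P1 ≠ Q' := fun hh => hQ'w (hh ▸ hP1w)
      have := three_le_dC_of_loop hF hP1F hQ'F hQ'P1 hP1u2end h1.symm (hQ'loop ▸ h1.symm)
      omega
  · -- Case II
    have hnu2 : ¬ P1.emem s(w, u2) := fun h => hc (vmem_of_emem h (mem_sym2_right w u2))
    -- helper to get lonely P2 when dC u2 = 1
    have getP2 : dC F hF u2 = 1 → ∃ P2 ∈ F, EndsAt P2 u2 ∧ P2.1 ≠ P2.2.1 ∧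
        (∀ Q ∈ F, PathIn.vmem u2 Q → Q = P2) ∧ P2.emem s(w, u2) ∧ P2.vmem w ∧
        ¬ P2.vmem u1 := by
      intro hd2
      obtain ⟨P2, hP2F, hP2u, hP2nt, huniq2⟩ := lonely hF hcov hu2 hd2
      have pe2 : P2.emem s(w, u2) := by
        rw [Sym2.eq_swap]
        exact leaf_pendant hu2 (nbrFinset_of_leaf hu2 hadj2.symm) (vmem_of_endsAt hP2u) hP2nt
      refine ⟨P2, hP2F, hP2u, hP2nt, huniq2, pe2, vmem_of_emem pe2 (mem_sym2_left w u2), ?_⟩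
      intro hvu1
      have hh : P2 = P1 := huniq1 P2 hP2F hvu1
      exact hc (hh ▸ vmem_of_endsAt hP2u)
    by_cases hEw : EndsAt P1 w
    · -- Case II.a
      have hEw' : w = P1.1 ∨ w = P1.2.1 := by
        rcases hEw with h | h
        · exact Or.inl h.symm
        · exact Or.inr h.symm
      have hax : ¬ P1.emem s(w, x) := fun h3 =>
        sym2_ne h1x (edge_at_endpoint_unique P1.2.2.2 hEw' pe1 h3
          (mem_sym2_left w u1) (mem_sym2_left w x))
      have hdw1 : 1 ≤ dC F hF w := one_le_dC hF hP1F hEw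
      by_cases hd2big : 2 ≤ dC F hF u2
      · omega
      · have hd2 : dC F hF u2 = 1 := by omega
        obtain ⟨P2, hP2F, hP2u, hP2nt, huniq2, pe2, hP2w, hP2nu1⟩ := getP2 hd2
        have hP1P2 : P1 ≠ P2 := fun hh => hP2nu1 (hh ▸ hP1u1)
        by_cases hE2 : EndsAt P2 w
        · have := two_le_dC_of_ne hF hP1F hP2F hP1P2 hEw hE2
          omega
        · rcases pass_through hnb h12 h1x h2x hP2w hE2 with ⟨h1, h2⟩ | ⟨h1, h2⟩ | ⟨h1, h2⟩
          · exact absurd (vmem_of_emem h1 (mem_sym2_right w u1)) hP2nu1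
          · exact absurd (vmem_of_emem h1 (mem_sym2_right w u1)) hP2nu1
          · -- P2 contains a = s(w,x)
            obtain ⟨Q, hQF, hQ⟩ := sepEV hsep hint u2
            rcases hQ with ⟨hQa, hQu2⟩ | ⟨hQa, hQu2⟩
            · have hQw : Q.vmem w := vmem_of_emem hQa (mem_sym2_left w x)
              by_cases hEQ : EndsAt Q w
              · have hQP1 : P1 ≠ Q := fun hh => hax (hh ▸ hQa)
                have := two_le_dC_of_ne hF hP1F hQF hQP1 hEw hEQ
                omega
              · rcases pass_through hnb h12 h1x h2x hQw hEQ with ⟨g1, g2⟩ | ⟨g1, g2⟩ | ⟨g1, g2⟩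
                · exact absurd (vmem_of_emem g2 (mem_sym2_right w u2)) hQu2
                · have hh : Q = P1 := huniq1 Q hQF (vmem_of_emem g1 (mem_sym2_right w u1))
                  exact absurd (hh ▸ g2) hax
                · exact absurd (vmem_of_emem g1 (mem_sym2_right w u2)) hQu2
            · have hh : Q = P2 := huniq2 Q hQF hQu2
              exact absurd (hh ▸ h2) (hh ▸ hQa)
    · -- Case II.b
      have ha1 : P1.emem s(w, x) := by
        rcases pass_through hnb h12 h1x h2x hP1w hEw with ⟨h1, h2⟩ | ⟨h1, h2⟩ | ⟨h1, h2⟩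
        · exact absurd h2 hnu2
        · exact h2
        · exact absurd h1 hnu2
      obtain ⟨Q, hQF, hQ⟩ := sepEV hsep hint w
      have hQgood : ¬ Q.emem s(w, x) ∧ Q.vmem w := by
        rcases hQ with ⟨hQa, hQw⟩ | ⟨hQa, hQw⟩
        · exact absurd (vmem_of_emem hQa (mem_sym2_left w x)) hQw
        · exact ⟨hQa, hQw⟩
      have hEQ : EndsAt Q w := by
        by_contra hEQ
        rcases pass_through hnb h12 h1x h2x hQgood.2 hEQ with ⟨g1, g2⟩ | ⟨g1, g2⟩ | ⟨g1, g2⟩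
        · have hh : Q = P1 := huniq1 Q hQF (vmem_of_emem g1 (mem_sym2_right w u1))
          exact absurd (hh ▸ g2) hnu2
        · exact absurd g2 hQgood.1
        · exact absurd g2 hQgood.1
      have hdw1 : 1 ≤ dC F hF w := one_le_dC hF hQF hEQ
      by_cases hd2big : 2 ≤ dC F hF u2
      · omega
      · have hd2 : dC F hF u2 = 1 := by omega
        obtain ⟨P2, hP2F, hP2u, hP2nt, huniq2, pe2, hP2w, hP2nu1⟩ := getP2 hd2
        by_cases hE2 : EndsAt P2 w
        · -- II.b.i
          have hE2' : w = P2.1 ∨ w = P2.2.1 := by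
            rcases hE2 with h | h
            · exact Or.inl h.symm
            · exact Or.inr h.symm
          have hax2 : ¬ P2.emem s(w, x) := fun h3 =>
            sym2_ne h2x (edge_at_endpoint_unique P2.2.2.2 hE2' pe2 h3
              (mem_sym2_left w u2) (mem_sym2_left w x))
          obtain ⟨Q2, hQ2F, hQ2⟩ := sepEV hsep hint u1
          rcases hQ2 with ⟨hQ2a, hQ2u1⟩ | ⟨hQ2a, hQ2u1⟩
          · have hQ2w : Q2.vmem w := vmem_of_emem hQ2a (mem_sym2_left w x)
            by_cases hEQ2 : EndsAt Q2 w
            · have hne : P2 ≠ Q2 := fun hh => hax2 (hh ▸ hQ2a)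
              have := two_le_dC_of_ne hF hP2F hQ2F hne hE2 hEQ2
              omega
            · rcases pass_through hnb h12 h1x h2x hQ2w hEQ2 with ⟨g1, g2⟩ | ⟨g1, g2⟩ | ⟨g1, g2⟩
              · exact absurd (vmem_of_emem g1 (mem_sym2_right w u1)) hQ2u1
              · exact absurd (vmem_of_emem g1 (mem_sym2_right w u1)) hQ2u1
              · have hh : Q2 = P2 := huniq2 Q2 hQ2F (vmem_of_emem g1 (mem_sym2_right w u2))
                exact absurd (hh ▸ g2) hax2
          · have hh : Q2 = P1 := huniq1 Q2 hQ2F hQ2u1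
            exact absurd (hh ▸ ha1) (hh ▸ hQ2a)
        · -- II.b.ii
          have ha2 : P2.emem s(w, x) := by
            rcases pass_through hnb h12 h1x h2x hP2w hE2 with ⟨h1, h2⟩ | ⟨h1, h2⟩ | ⟨h1, h2⟩
            · exact absurd (vmem_of_emem h1 (mem_sym2_right w u1)) hP2nu1
            · exact absurd (vmem_of_emem h1 (mem_sym2_right w u1)) hP2nu1
            · exact h2
          -- Q ends at w, contains no edge at w: it is the trivial loop at w
          have hQloop : Q.1 = Q.2.1 := by
            by_contra hne
            rcases end_edge hnb hEQ hne with h | h | h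
            · have hh : Q = P1 := huniq1 Q hQF (vmem_of_emem h (mem_sym2_right w u1))
              exact hEw (hh ▸ hEQ)
            · have hh : Q = P2 := huniq2 Q hQF (vmem_of_emem h (mem_sym2_right w u2))
              exact hE2 (hh ▸ hEQ)
            · exact hQgood.1 h
          have h1 : Q.1 = w := by
            rcases hEQ with h | h
            · exact h
            · exact hQloop.trans h
          have := two_le_dC_of_loop hF hQF h1 (hQloop ▸ h1)
          omega

lemma perW (hsep : Separates G ((Sum.inl '' Set.univ) ∪ (Sum.inr '' interiorEdgeSet G)) F)
    (hcov : Covers G ((Sum.inl '' Set.univ) ∪ (Sum.inr '' interiorEdgeSet G)) F)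
    {w : V} (hw3 : G.degree w = 3)
    (hfib : (Finset.univ.filter (fun u => G.degree u = 1 ∧ G.Adj w u)).card ≤ 2) :
    2 * (Finset.univ.filter (fun u => G.degree u = 1 ∧ G.Adj w u)).card ≤
      dC F hF w + ∑ u ∈ Finset.univ.filter (fun u => G.degree u = 1 ∧ G.Adj w u),
        dC F hF u := by
  set fib := Finset.univ.filter (fun u => G.degree u = 1 ∧ G.Adj w u) with hfibdef
  have hfmem : ∀ u, u ∈ fib ↔ G.degree u = 1 ∧ G.Adj w u := by
    intro u; simp [hfibdef]
  have hsub : fib ⊆ G.neighborFinset w := by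
    intro u hu
    exact (SimpleGraph.mem_neighborFinset _ _ _).mpr ((hfmem u).mp hu).2
  have hcard3 : (G.neighborFinset w).card = 3 := by
    rw [G.card_neighborFinset_eq_degree]; exact hw3
  have hwne1 : G.degree w ≠ 1 := by omega
  have hnotfib : ∀ z ∈ G.neighborFinset w, z ∉ fib → G.degree z ≠ 1 := by
    intro z hz hzf h1
    exact hzf ((hfmem z).mpr ⟨h1, (SimpleGraph.mem_neighborFinset _ _ _).mp hz⟩)
  interval_cases hc : fib.card
  · simp
  · obtain ⟨u, hu⟩ := Finset.card_eq_one.mp hc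
    have hufib : u ∈ fib := by rw [hu]; exact Finset.mem_singleton_self u
    have humem := (hfmem u).mp hufib
    have hunb : u ∈ G.neighborFinset w := hsub hufib
    have herase : ((G.neighborFinset w).erase u).card = 2 := by
      rw [Finset.card_erase_of_mem hunb, hcard3]
    obtain ⟨x, y, hxy, hexy⟩ := Finset.card_eq_two.mp herase
    have hxmem : x ∈ (G.neighborFinset w).erase u := by rw [hexy]; simp
    have hymem : y ∈ (G.neighborFinset w).erase u := by rw [hexy]; simp
    have hnb : G.neighborFinset w = {u, x, y} := by
      rw [← Finset.insert_erase hunb, hexy]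
    have hux : u ≠ x := (Finset.mem_erase.mp hxmem).1.symm
    have huy : u ≠ y := (Finset.mem_erase.mp hymem).1.symm
    have hdx : G.degree x ≠ 1 := hnotfib x (Finset.mem_of_mem_erase hxmem)
      (fun hh => hux (by rw [hu] at hh; exact (Finset.mem_singleton.mp hh).symm))
    have hdy : G.degree y ≠ 1 := hnotfib y (Finset.mem_of_mem_erase hymem)
      (fun hh => huy (by rw [hu] at hh; exact (Finset.mem_singleton.mp hh).symm))
    rw [hu, Finset.sum_singleton]
    have hul : 1 ≤ dC F hF u := one_le_dC_leaf hF hcov humem.1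
    by_cases hd1 : dC F hF u = 1
    · have := S1 hF hsep hcov hnb humem.1 hwne1 hdx hdy hux huy hxy hd1
      omega
    · omega
  · obtain ⟨u1, u2, h12, hu⟩ := Finset.card_eq_two.mp hc
    have hu1fib : u1 ∈ fib := by rw [hu]; simp
    have hu2fib : u2 ∈ fib := by rw [hu]; simp
    have hu1mem := (hfmem u1).mp hu1fib
    have hu2mem := (hfmem u2).mp hu2fib
    have hdiff : (G.neighborFinset w \ fib).card = 1 := by
      rw [Finset.card_sdiff_of_subset hsub, hcard3, hc]
    obtain ⟨x, hx⟩ := Finset.card_eq_one.mp hdiff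
    have hxmem : x ∈ G.neighborFinset w \ fib := by rw [hx]; simp
    have hxnb : x ∈ G.neighborFinset w := (Finset.mem_sdiff.mp hxmem).1
    have hxnf : x ∉ fib := (Finset.mem_sdiff.mp hxmem).2
    have hdx : G.degree x ≠ 1 := hnotfib x hxnb hxnf
    have h1x : u1 ≠ x := fun hh => hxnf (hh ▸ hu1fib)
    have h2x : u2 ≠ x := fun hh => hxnf (hh ▸ hu2fib)
    have hnb : G.neighborFinset w = {u1, u2, x} := by
      rw [hu] at hx
      rw [← Finset.union_sdiff_of_subset hsub, hu, hx]
      ext z; simp [or_assoc]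
    rw [hu, Finset.sum_pair h12]
    have hl1 : 1 ≤ dC F hF u1 := one_le_dC_leaf hF hcov hu1mem.1
    have hl2 : 1 ≤ dC F hF u2 := one_le_dC_leaf hF hcov hu2mem.1
    by_cases hd1 : dC F hF u1 = 1
    · have := bigS hF hsep hcov hnb hu1mem.1 hu2mem.1 hwne1 hdx h12 h1x h2x hd1
      omega
    · by_cases hd2 : dC F hF u2 = 1
      · have hnb2 : G.neighborFinset w = {u2, u1, x} := by
          rw [hnb]; ext z; simp; tauto
        have := bigS hF hsep hcov hnb2 hu2mem.1 hu1mem.1 hwne1 hdx (Ne.symm h12) h2x h1x hd2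
        omega
      · omega

lemma closure_walk {C : Set V} (hC : ∀ a ∈ C, ∀ b, G.Adj a b → b ∈ C)
    {s t : V} (p : G.Walk s t) (hs : s ∈ C) : t ∈ C := by
  induction p with
  | nil => exact hs
  | cons h q ih => exact ih (hC _ hs _ h)

end Local

end Stmt9Aux

theorem stmt9 [Fintype V] (G : SimpleGraph V) (hT : G.IsTree)
    (hcard : 4 ≤ Fintype.card V)
    (hdeg : ∀ v : V, G.degree v = 1 ∨ G.degree v = 3)
    (F : Set (PathIn G)) (hF : F.Finite)
    (hsep : Separates G ((Sum.inl '' Set.univ) ∪ (Sum.inr '' interiorEdgeSet G)) F)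
    (hcov : Covers G ((Sum.inl '' Set.univ) ∪ (Sum.inr '' interiorEdgeSet G)) F) :
    leafCount G ≤ F.ncard := by
  classical
  open Stmt9Aux in
  have hconn := hT.isConnected
  set L := Finset.univ.filter (fun v => G.degree v = 1) with hLdef
  have hleaf : leafCount G = L.card := by
    rw [leafCount, Nat.card_coe_set_eq, Set.ncard_eq_toFinset_card']
    congr 1
    ext v
    simp [hLdef]
  have hncard : F.ncard = hF.toFinset.card := Set.ncard_eq_toFinset_card F hF
  rw [hleaf, hncard]
  have hnbr1 : ∀ u, G.degree u = 1 → ∃ w, G.neighborFinset u = {w} := by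
    intro u hu
    exact Finset.card_eq_one.mp (by rw [G.card_neighborFinset_eq_degree]; exact hu)
  have hnbrdeg : ∀ u w, G.degree u = 1 → G.neighborFinset u = {w} → G.degree w = 3 := by
    intro u w hu hw
    rcases hdeg w with h1 | h3
    · exfalso
      have hadj_uw : G.Adj u w := Stmt9Aux.adj_of_nbr hw (Finset.mem_singleton_self w)
      have hnw : G.neighborFinset w = {u} := Stmt9Aux.nbrFinset_of_leaf h1 hadj_uw.symm
      have hC : ∀ a ∈ ({u, w} : Set V), ∀ b, G.Adj a b → b ∈ ({u, w} : Set V) := by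
        intro a ha b hab
        rcases ha with rfl | rfl
        · have : b ∈ G.neighborFinset a := (SimpleGraph.mem_neighborFinset _ _ _).mpr hab
          rw [hw, Finset.mem_singleton] at this
          right; exact this
        · have : b ∈ G.neighborFinset a := (SimpleGraph.mem_neighborFinset _ _ _).mpr hab
          rw [hnw, Finset.mem_singleton] at this
          left; exact this
      have hall : ∀ v : V, v ∈ ({u, w} : Set V) := fun v =>
        (hconn.preconnected u v).elim fun p =>
          Stmt9Aux.closure_walk hC p (Or.inl rfl)
      have hsubU : (Finset.univ : Finset V) ⊆ {u, w} := by
        intro v _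
        rcases hall v with rfl | rfl
        · simp
        · simp
      have := Finset.card_le_card hsubU
      have h2 : ({u, w} : Finset V).card ≤ 2 :=
        (Finset.card_insert_le _ _).trans (by simp)
      rw [Finset.card_univ] at this
      omega
    · exact h3
  by_cases hK : ∃ w, G.degree w = 3 ∧ ∀ z ∈ G.neighborFinset w, G.degree z = 1
  · -- star case : the graph is K_{1,3}
    obtain ⟨w, hw3, hall⟩ := hK
    have hC : ∀ a ∈ {v | v = w ∨ G.Adj w v}, ∀ b, G.Adj a b →
        b ∈ {v | v = w ∨ G.Adj w v} := by
      intro a ha b hab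
      rcases ha with rfl | ha
      · exact Or.inr hab
      · have hdega : G.degree a = 1 :=
          hall a ((SimpleGraph.mem_neighborFinset _ _ _).mpr ha)
        have hna : G.neighborFinset a = {w} := Stmt9Aux.nbrFinset_of_leaf hdega ha.symm
        have : b ∈ G.neighborFinset a := (SimpleGraph.mem_neighborFinset _ _ _).mpr hab
        rw [hna, Finset.mem_singleton] at this
        exact Or.inl this
    have hallv : ∀ v : V, v = w ∨ G.Adj w v := fun v =>
      (hconn.preconnected w v).elim fun p =>
        Stmt9Aux.closure_walk hC p (Or.inl rfl)
    have hsubU : (Finset.univ : Finset V) ⊆ insert w (G.neighborFinset w) := by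
      intro v _
      rcases hallv v with rfl | hv
      · simp
      · exact Finset.mem_insert_of_mem ((SimpleGraph.mem_neighborFinset _ _ _).mpr hv)
    have hcard4 : Fintype.card V ≤ 4 := by
      have h1 := Finset.card_le_card hsubU
      have h2 := Finset.card_insert_le w (G.neighborFinset w)
      rw [Finset.card_univ] at h1
      have h3 : (G.neighborFinset w).card = 3 := by
        rw [G.card_neighborFinset_eq_degree]; exact hw3
      omega
    have hLle : L.card ≤ 3 := by
      have hsub : L ⊆ Finset.univ.erase w := by
        intro v hv
        rw [hLdef, Finset.mem_filter] at hv
        refine Finset.mem_erase.mpr ⟨?_, Finset.mem_univ v⟩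
        intro hh
        rw [hh] at hv
        omega
      have := Finset.card_le_card hsub
      rw [Finset.card_erase_of_mem (Finset.mem_univ w), Finset.card_univ] at this
      omega
    -- now show 3 ≤ number of paths via distinct nonempty signatures
    set Fs := hF.toFinset with hFsdef
    set σ : V → Finset (PathIn G) := fun v => Fs.filter (fun P => P.vmem v) with hσdef
    have hinj : Function.Injective σ := by
      intro v v' hvv
      by_contra hne
      obtain ⟨P, hPF, hP⟩ := Stmt9Aux.sepVV hsep hne
      have hPFs : P ∈ Fs := hF.mem_toFinset.mpr hPF
      rcases hP with ⟨h1, h2⟩ | ⟨h1, h2⟩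
      · have : P ∈ σ v := Finset.mem_filter.mpr ⟨hPFs, h1⟩
        rw [hvv] at this
        exact h2 (Finset.mem_filter.mp this).2
      · have : P ∈ σ v' := Finset.mem_filter.mpr ⟨hPFs, h2⟩
        rw [← hvv] at this
        exact h1 (Finset.mem_filter.mp this).2
    have himg : Finset.univ.image σ ⊆ (Fs.powerset).erase ∅ := by
      intro s hs
      obtain ⟨v, -, rfl⟩ := Finset.mem_image.mp hs
      refine Finset.mem_erase.mpr ⟨?_, Finset.mem_powerset.mpr (Finset.filter_subset _ _)⟩
      obtain ⟨P, hPF, hP⟩ := Stmt9Aux.covV hcov v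
      exact Finset.ne_empty_of_mem (Finset.mem_filter.mpr ⟨hF.mem_toFinset.mpr hPF, hP⟩)
    have hcount : Fintype.card V ≤ 2 ^ Fs.card - 1 := by
      have h1 : (Finset.univ.image σ).card = Fintype.card V := by
        rw [Finset.card_image_of_injective _ hinj, Finset.card_univ]
      have h2 := Finset.card_le_card himg
      rw [h1, Finset.card_erase_of_mem (Finset.empty_mem_powerset Fs),
        Finset.card_powerset] at h2
      exact h2
    have h3m : 3 ≤ Fs.card := by
      by_contra hm
      push_neg at hm
      interval_cases hFs : Fs.card <;> simp_all <;> omega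
    omega
  · -- main case
    push_neg at hK
    have hfible : ∀ w, G.degree w = 3 →
        (Finset.univ.filter (fun u => G.degree u = 1 ∧ G.Adj w u)).card ≤ 2 := by
      intro w hw3
      set fib := Finset.univ.filter (fun u => G.degree u = 1 ∧ G.Adj w u) with hfibdef
      have hsub : fib ⊆ G.neighborFinset w := by
        intro u hu
        rw [hfibdef, Finset.mem_filter] at hu
        exact (SimpleGraph.mem_neighborFinset _ _ _).mpr hu.2.2
      have hcard3 : (G.neighborFinset w).card = 3 := by
        rw [G.card_neighborFinset_eq_degree]; exact hw3
      by_contra hgt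
      push_neg at hgt
      have hle3 : fib.card ≤ 3 := hcard3 ▸ Finset.card_le_card hsub
      have heq : fib = G.neighborFinset w :=
        Finset.eq_of_subset_of_card_le hsub (by omega)
      obtain ⟨z, hz, hzdeg⟩ := hK w hw3
      rw [← heq, hfibdef, Finset.mem_filter] at hz
      exact hzdeg hz.2.1
    set φ : V → V := fun u =>
      if h : ∃ w, G.neighborFinset u = {w} then h.choose else u with hφdef
    have hφspec : ∀ u, G.degree u = 1 → G.neighborFinset u = {φ u} := by
      intro u hu
      have h := hnbr1 u hu
      rw [hφdef]
      simp only [dif_pos h]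
      exact h.choose_spec
    set W := Finset.univ.filter (fun v => G.degree v = 3) with hWdef
    have hmaps : ∀ u ∈ L, φ u ∈ W := by
      intro u hu
      rw [hLdef, Finset.mem_filter] at hu
      rw [hWdef, Finset.mem_filter]
      exact ⟨Finset.mem_univ _, hnbrdeg u (φ u) hu.2 (hφspec u hu.2)⟩
    have hfiber : ∀ w, G.degree w = 3 → L.filter (fun u => φ u = w) =
        Finset.univ.filter (fun u => G.degree u = 1 ∧ G.Adj w u) := by
      intro w hw3
      ext u
      simp only [hLdef, Finset.mem_filter, Finset.mem_univ, true_and]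
      constructor
      · rintro ⟨hu1, hφu⟩
        refine ⟨hu1, ?_⟩
        have := Stmt9Aux.adj_of_nbr (hφspec u hu1) (Finset.mem_singleton_self _)
        rw [hφu] at this
        exact this.symm
      · rintro ⟨hu1, hadj⟩
        refine ⟨hu1, ?_⟩
        have : w ∈ G.neighborFinset u := (SimpleGraph.mem_neighborFinset _ _ _).mpr hadj.symm
        rw [hφspec u hu1, Finset.mem_singleton] at this
        exact this.symm
    have hdisj : Disjoint W L := by
      rw [Finset.disjoint_left]
      intro a haW haL
      rw [hWdef, Finset.mem_filter] at haW
      rw [hLdef, Finset.mem_filter] at haL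
      omega
    have key : 2 * L.card ≤ ∑ v : V, Stmt9Aux.dC F hF v := by
      calc 2 * L.card = ∑ _u ∈ L, 2 := by
            rw [Finset.sum_const, smul_eq_mul, mul_comm]
      _ = ∑ w ∈ W, ∑ u ∈ L.filter (fun u => φ u = w), 2 :=
            (Finset.sum_fiberwise_of_maps_to hmaps _).symm
      _ ≤ ∑ w ∈ W, (Stmt9Aux.dC F hF w + ∑ u ∈ L.filter (fun u => φ u = w),
            Stmt9Aux.dC F hF u) := by
            apply Finset.sum_le_sum
            intro w hw
            have hw3 : G.degree w = 3 := by
              rw [hWdef, Finset.mem_filter] at hw; exact hw.2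
            rw [hfiber w hw3]
            have := Stmt9Aux.perW hF hsep hcov hw3 (hfible w hw3)
            rw [Finset.sum_const, smul_eq_mul, mul_comm]
            exact this
      _ = ∑ w ∈ W, Stmt9Aux.dC F hF w + ∑ w ∈ W, ∑ u ∈ L.filter (fun u => φ u = w),
            Stmt9Aux.dC F hF u := Finset.sum_add_distrib
      _ = ∑ w ∈ W, Stmt9Aux.dC F hF w + ∑ u ∈ L, Stmt9Aux.dC F hF u := by
            rw [Finset.sum_fiberwise_of_maps_to hmaps]
      _ = ∑ v ∈ W ∪ L, Stmt9Aux.dC F hF v := (Finset.sum_union hdisj).symm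
      _ ≤ ∑ v : V, Stmt9Aux.dC F hF v :=
            Finset.sum_le_sum_of_subset (Finset.subset_univ _)
    rw [Stmt9Aux.sum_dC] at key
    omega
end

section
/- For every tree T, every family of paths that separates and covers V(T) has size at least (h₁(T) + h₂*(T))/2, where h₁(T) is the number of leaves and h₂*(T) = h₂(T) − |I|, with h₂(T) the number of degree-2 vertices and I the set of maximal bare paths of T that contain no leaf and have at least two edges. -/
open SimpleGraph
open scoped Classical

universe u

variable {V : Type u}

/-- The set of (endpoint pairs of) maximal bare paths of `G` containing no leaf
and having at least two edges. -/
noncomputable def bareNoLeafSet (G : SimpleGraph V) [Fintype V] : Set (Sym2 V) :=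
  {p : Sym2 V | ∃ (x y : V) (w : G.Walk x y), p = s(x, y) ∧ w.IsPath ∧ 2 ≤ w.length ∧
    (∀ z ∈ w.support, z ≠ x → z ≠ y → G.degree z = 2) ∧
    G.degree x ≠ 1 ∧ G.degree x ≠ 2 ∧ G.degree y ≠ 1 ∧ G.degree y ≠ 2}


section WalkLemmas
variable {G : SimpleGraph V} [Fintype V]

/-- An interior vertex of a path has two distinct neighbors on the path. -/
lemma interior_two_nbrs {x y c : V} {w : G.Walk x y} (hw : w.IsPath)
    (hc : c ∈ w.support) (hx : c ≠ x) (hy : c ≠ y) :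
    ∃ u₁ u₂, u₁ ≠ u₂ ∧ G.Adj c u₁ ∧ G.Adj c u₂ ∧ u₁ ∈ w.support ∧ u₂ ∈ w.support := by
  induction w with
  | nil =>
    simp only [SimpleGraph.Walk.support_nil, List.mem_singleton] at hc
    exact absurd hc hx
  | @cons a b y h q ih =>
    rw [SimpleGraph.Walk.cons_isPath_iff] at hw
    rw [SimpleGraph.Walk.support_cons, List.mem_cons] at hc
    rcases hc with rfl | hc
    · exact absurd rfl hx
    by_cases hcb : c = b
    · subst hcb
      -- c = b : neighbors are a and the second vertex of q
      cases q with
      | nil => exact absurd rfl hy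
      | @cons b e y h2 q2 =>
        refine ⟨a, e, ?_, h.symm, h2, ?_, ?_⟩
        · rintro rfl
          refine hw.2 ?_
          rw [SimpleGraph.Walk.support_cons]
          exact List.mem_cons_of_mem _ q2.start_mem_support
        · simp [SimpleGraph.Walk.support_cons]
        · simp [SimpleGraph.Walk.support_cons]
    · obtain ⟨u₁, u₂, hne, h1, h2, m1, m2⟩ := ih hw.1 hc hcb hy
      refine ⟨u₁, u₂, hne, h1, h2, ?_, ?_⟩ <;>
        simp [SimpleGraph.Walk.support_cons, m1, m2]

/-- A vertex of degree ≤ 1 on a path is an endpoint. -/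
lemma leaf_endpoint {x y c : V} {w : G.Walk x y} (hw : w.IsPath)
    (hc : c ∈ w.support) (hdeg : G.degree c ≤ 1) : c = x ∨ c = y := by
  by_contra hcon
  push_neg at hcon
  obtain ⟨u₁, u₂, hne, h1, h2, _, _⟩ := interior_two_nbrs hw hc hcon.1 hcon.2
  have hsub : {u₁, u₂} ⊆ G.neighborFinset c := by
    intro z hz
    rw [SimpleGraph.mem_neighborFinset]
    rcases Finset.mem_insert.mp hz with rfl | hz
    · exact h1
    · rw [Finset.mem_singleton] at hz; subst hz; exact h2
  have := Finset.card_le_card hsub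
  rw [Finset.card_insert_of_notMem (by simp [hne]), Finset.card_singleton] at this
  rw [SimpleGraph.degree] at hdeg
  omega

/-- A vertex of degree ≤ 2 on a path that has a neighbor avoiding the path is an endpoint. -/
lemma deg_two_endpoint {x y c d : V} {w : G.Walk x y} (hw : w.IsPath)
    (hc : c ∈ w.support) (hdeg : G.degree c ≤ 2) (hadj : G.Adj c d)
    (hd : d ∉ w.support) : c = x ∨ c = y := by
  by_contra hcon
  push_neg at hcon
  obtain ⟨u₁, u₂, hne, h1, h2, m1, m2⟩ := interior_two_nbrs hw hc hcon.1 hcon.2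
  have hd1 : d ≠ u₁ := fun h => hd (h ▸ m1)
  have hd2 : d ≠ u₂ := fun h => hd (h ▸ m2)
  have hsub : {d, u₁, u₂} ⊆ G.neighborFinset c := by
    intro z hz
    rw [SimpleGraph.mem_neighborFinset]
    rcases Finset.mem_insert.mp hz with rfl | hz
    · exact hadj
    rcases Finset.mem_insert.mp hz with rfl | hz
    · exact h1
    · rw [Finset.mem_singleton] at hz; subst hz; exact h2
  have := Finset.card_le_card hsub
  rw [Finset.card_insert_of_notMem (by simp [hd1, hd2]),
    Finset.card_insert_of_notMem (by simp [hne]), Finset.card_singleton] at this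
  rw [SimpleGraph.degree] at hdeg
  omega

/-- If an endpoint of a walk has no neighbor on the walk, the walk is a point. -/
lemma endpoint_no_nbr_aux {x y : V} (w : G.Walk x y)
    (h : ∀ u, G.Adj x u → u ∉ w.support) : x = y := by
  cases w with
  | nil => rfl
  | @cons a b y hadj q =>
    exfalso
    exact h b hadj (by simp [SimpleGraph.Walk.support_cons])

lemma endpoint_no_nbr {x y c : V} (w : G.Walk x y) (hc : c = x ∨ c = y)
    (h : ∀ u, G.Adj c u → u ∉ w.support) : x = y := by
  rcases hc with rfl | rfl
  · exact endpoint_no_nbr_aux w h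
  · refine (endpoint_no_nbr_aux w.reverse (fun u hu hmem => ?_)).symm
    exact h u hu (by rwa [SimpleGraph.Walk.support_reverse, List.mem_reverse] at hmem)

/-- Degree-1 vertices have a unique neighbor. -/
lemma deg_one_unique_nbr {c u u' : V} (h : G.degree c ≤ 1)
    (h1 : G.Adj c u) (h2 : G.Adj c u') : u = u' := by
  have m1 : u ∈ G.neighborFinset c := (SimpleGraph.mem_neighborFinset _ _ _).mpr h1
  have m2 : u' ∈ G.neighborFinset c := (SimpleGraph.mem_neighborFinset _ _ _).mpr h2
  rw [SimpleGraph.degree] at h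
  exact Finset.card_le_one.mp h u m1 u' m2

/-- If a degree-≤2 vertex has two distinct neighbors, every neighbor is one of them. -/
lemma deg_two_nbrs {c d d' u : V} (hdeg : G.degree c ≤ 2) (hne : d ≠ d')
    (h1 : G.Adj c d) (h2 : G.Adj c d') (hu : G.Adj c u) : u = d ∨ u = d' := by
  have hsub : {d, d'} ⊆ G.neighborFinset c := by
    intro z hz
    rw [SimpleGraph.mem_neighborFinset]
    rcases Finset.mem_insert.mp hz with rfl | hz
    · exact h1
    · rw [Finset.mem_singleton] at hz; subst hz; exact h2
  have hcard : ({d, d'} : Finset V).card = 2 := by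
    rw [Finset.card_insert_of_notMem (by simp [hne]), Finset.card_singleton]
  have heq : G.neighborFinset c = {d, d'} :=
    (Finset.eq_of_subset_of_card_le hsub (by rw [hcard]; exact hdeg)).symm
  have : u ∈ G.neighborFinset c := (SimpleGraph.mem_neighborFinset _ _ _).mpr hu
  rw [heq] at this
  simpa using this

/-- A path whose two endpoints coincide, given an interior point with both excluded
neighbors, must be degenerate. -/
lemma trivial_of_two_nbrs_excluded {x y c d d' : V} {w : G.Walk x y} (hw : w.IsPath)
    (hc : c ∈ w.support) (hdeg : G.degree c ≤ 2) (hne : d ≠ d')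
    (h1 : G.Adj c d) (h2 : G.Adj c d') (hd : d ∉ w.support) (hd' : d' ∉ w.support) :
    x = y := by
  have hend := deg_two_endpoint hw hc hdeg h1 hd
  refine endpoint_no_nbr w hend (fun u hu hmem => ?_)
  rcases deg_two_nbrs hdeg hne h1 h2 hu with rfl | rfl
  · exact hd hmem
  · exact hd' hmem



omit [Fintype V] in
/-- The far endpoint is not on `takeUntil` (for a path, stopping strictly earlier). -/
lemma end_not_mem_takeUntil [DecidableEq V] {x y v : V} {w : G.Walk x y} (hw : w.IsPath)
    (hv : v ∈ w.support) (hvy : v ≠ y) : y ∉ (w.takeUntil v hv).support := by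
  intro hy
  have hspec := SimpleGraph.Walk.take_spec w hv
  have hnd : w.support.Nodup := hw.support_nodup
  rw [← hspec, SimpleGraph.Walk.support_append] at hnd
  have hy2 : y ∈ (w.dropUntil v hv).support.tail := by
    have : y ∈ (w.dropUntil v hv).support := SimpleGraph.Walk.end_mem_support _
    rw [SimpleGraph.Walk.support_eq_cons] at this
    rcases List.mem_cons.mp this with h | h
    · exact absurd h.symm hvy
    · exact h
  exact (List.disjoint_of_nodup_append hnd) hy hy2

omit [Fintype V] in
/-- The start is not on `dropUntil` (for a path, when dropping a nontrivial prefix). -/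
lemma start_notMem_dropUntil [DecidableEq V] {x y v : V} {w : G.Walk x y} (hw : w.IsPath)
    (hv : v ∈ w.support) (hvx : v ≠ x) : x ∉ (w.dropUntil v hv).support := by
  intro hx
  have hspec := SimpleGraph.Walk.take_spec w hv
  have hnd : w.support.Nodup := hw.support_nodup
  rw [← hspec, SimpleGraph.Walk.support_append] at hnd
  have hx2 : x ∈ (w.dropUntil v hv).support.tail := by
    rw [SimpleGraph.Walk.support_eq_cons] at hx
    rcases List.mem_cons.mp hx with h | h
    · exact absurd h.symm hvx
    · exact h
  exact (List.disjoint_of_nodup_append hnd)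
    (SimpleGraph.Walk.start_mem_support _) hx2

/-- Closure: a walk all of whose vertices except the last have degree 2, starting in a
"closed" set, stays in that set. -/
lemma walk_stays_in_closed {S : Set V}
    (hS : ∀ z ∈ S, G.degree z = 2 → ∀ u, G.Adj z u → u ∈ S) :
    ∀ {v u : V} (q : G.Walk v u), q.IsPath → v ∈ S →
      (∀ z ∈ q.support, z ≠ u → G.degree z = 2) → ∀ z ∈ q.support, z ∈ S := by
  intro v u q
  induction q with
  | nil =>
    intro _ hv _ z hz
    simp only [SimpleGraph.Walk.support_nil, List.mem_singleton] at hz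
    exact hz ▸ hv
  | @cons a b u hadj q ih =>
    intro hq ha hdeg z hz
    rw [SimpleGraph.Walk.cons_isPath_iff] at hq
    have hau : a ≠ u := by
      rintro rfl
      exact hq.2 (SimpleGraph.Walk.end_mem_support q)
    have hda : G.degree a = 2 :=
      hdeg a (SimpleGraph.Walk.start_mem_support _) hau
    have hb : b ∈ S := hS a ha hda b hadj
    rw [SimpleGraph.Walk.support_cons, List.mem_cons] at hz
    rcases hz with rfl | hz
    · exact ha
    · refine ih hq.1 hb (fun z' hz' hz'u => hdeg z' ?_ hz'u) z hz
      rw [SimpleGraph.Walk.support_cons]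
      exact List.mem_cons_of_mem _ hz'

/-- A bare walk: a path whose interior vertices have degree 2 and whose ends do not. -/
def IsBareWalk (G : SimpleGraph V) [Fintype V] {x y : V} (w : G.Walk x y) : Prop :=
  w.IsPath ∧ (∀ z ∈ w.support, z ≠ x → z ≠ y → G.degree z = 2) ∧
    G.degree x ≠ 2 ∧ G.degree y ≠ 2

/-- The support of a bare walk is closed under moving to neighbors of degree-2 vertices. -/
lemma bare_support_closed {x y : V} {w : G.Walk x y} (hw : IsBareWalk G w) :
    ∀ z ∈ ({z | z ∈ w.support} : Set V), G.degree z = 2 →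
      ∀ u, G.Adj z u → u ∈ ({z | z ∈ w.support} : Set V) := by
  obtain ⟨hp, hint, hx2, hy2⟩ := hw
  intro z hz hdz u hu
  have hzx : z ≠ x := fun h => hx2 (h ▸ hdz)
  have hzy : z ≠ y := fun h => hy2 (h ▸ hdz)
  obtain ⟨u₁, u₂, hne, h1, h2, m1, m2⟩ := interior_two_nbrs hp hz hzx hzy
  rcases deg_two_nbrs (le_of_eq hdz) hne h1 h2 hu with rfl | rfl
  · exact m1
  · exact m2

/-- Any vertex of a second bare walk sharing an interior vertex with `w` lies on `w`. -/
lemma bare_subset {x y x' y' v : V} {w : G.Walk x y} {w' : G.Walk x' y'}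
    (hw : IsBareWalk G w) (hw' : IsBareWalk G w')
    (hv : v ∈ w.support) (hv' : v ∈ w'.support)
    (hvx' : v ≠ x') (hvy' : v ≠ y') :
    ∀ z ∈ w'.support, z ∈ w.support := by
  have hclosed := bare_support_closed hw
  obtain ⟨hp', hint', hx2', hy2'⟩ := hw'
  -- x' side
  have hx'mem : x' ∈ w.support := by
    have hq : ((w'.takeUntil v hv').reverse).IsPath := (hp'.takeUntil hv').reverse
    have hmem : ∀ z ∈ ((w'.takeUntil v hv').reverse).support, z ∈ w.support := by
      refine walk_stays_in_closed hclosed _ hq hv ?_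
      intro z hz hzx'
      rw [SimpleGraph.Walk.support_reverse, List.mem_reverse] at hz
      have hzy' : z ≠ y' := by
        rintro rfl
        exact end_not_mem_takeUntil hp' hv' hvy' hz
      exact hint' z (SimpleGraph.Walk.support_takeUntil_subset _ _ hz) hzx' hzy'
    refine hmem x' ?_
    rw [SimpleGraph.Walk.support_reverse, List.mem_reverse]
    exact SimpleGraph.Walk.start_mem_support _
  have hy'mem : y' ∈ w.support := by
    have hq : (w'.dropUntil v hv').IsPath := hp'.dropUntil hv'
    have hmem : ∀ z ∈ (w'.dropUntil v hv').support, z ∈ w.support := by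
      refine walk_stays_in_closed hclosed _ hq hv ?_
      intro z hz hzy'
      have hzx' : z ≠ x' := by
        rintro rfl
        exact start_notMem_dropUntil hp' hv' hvx' hz
      exact hint' z (SimpleGraph.Walk.support_dropUntil_subset _ _ hz) hzx' hzy'
    exact hmem y' (SimpleGraph.Walk.end_mem_support _)
  -- now any z on w'
  intro z hz
  by_cases hzx' : z = x'
  · exact hzx' ▸ hx'mem
  by_cases hzy' : z = y'
  · exact hzy' ▸ hy'mem
  by_cases hzd : z ∈ (w'.dropUntil v hv').support
  · -- use the sub-walk of dropUntil from v to z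
    set d := w'.dropUntil v hv' with hd
    have hdp : d.IsPath := hp'.dropUntil hv'
    have hq : (d.takeUntil z hzd).IsPath := hdp.takeUntil hzd
    have hmem : ∀ u ∈ (d.takeUntil z hzd).support, u ∈ w.support := by
      refine walk_stays_in_closed hclosed _ hq hv ?_
      intro u hu huz
      have husup : u ∈ w'.support :=
        SimpleGraph.Walk.support_dropUntil_subset _ _
          (SimpleGraph.Walk.support_takeUntil_subset _ _ hu)
      have hux' : u ≠ x' := by
        rintro rfl
        exact start_notMem_dropUntil hp' hv' hvx'
          (SimpleGraph.Walk.support_takeUntil_subset _ _ hu)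
      have huy' : u ≠ y' := by
        rintro rfl
        exact end_not_mem_takeUntil hdp hzd hzy' hu
      exact hint' u husup hux' huy'
    exact hmem z (SimpleGraph.Walk.end_mem_support _)
  · -- z is on the takeUntil part
    have hzt : z ∈ (w'.takeUntil v hv').support := by
      have := hz
      rw [← SimpleGraph.Walk.take_spec w' hv', SimpleGraph.Walk.support_append,
        List.mem_append] at this
      rcases this with h | h
      · exact h
      · exact absurd (List.mem_of_mem_tail h) hzd
    set r := (w'.takeUntil v hv').reverse with hr
    have hrp : r.IsPath := (hp'.takeUntil hv').reverse
    have hzr : z ∈ r.support := by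
      rw [hr, SimpleGraph.Walk.support_reverse, List.mem_reverse]; exact hzt
    have hq : (r.takeUntil z hzr).IsPath := hrp.takeUntil hzr
    have hmem : ∀ u ∈ (r.takeUntil z hzr).support, u ∈ w.support := by
      refine walk_stays_in_closed hclosed _ hq hv ?_
      intro u hu huz
      have hur : u ∈ r.support := SimpleGraph.Walk.support_takeUntil_subset _ _ hu
      have hut : u ∈ (w'.takeUntil v hv').support := by
        rwa [hr, SimpleGraph.Walk.support_reverse, List.mem_reverse] at hur
      have husup : u ∈ w'.support := SimpleGraph.Walk.support_takeUntil_subset _ _ hut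
      have hux' : u ≠ x' := by
        rintro rfl
        exact end_not_mem_takeUntil hrp hzr hzx' hu
      have huy' : u ≠ y' := by
        rintro rfl
        exact end_not_mem_takeUntil hp' hv' hvy' hut
      exact hint' u husup hux' huy'
    exact hmem z (SimpleGraph.Walk.end_mem_support _)


omit [Fintype V] in
lemma path_loop_support {x : V} (w : G.Walk x x) (hw : w.IsPath) : w.support = [x] := by
  cases w with
  | nil => simp
  | cons h q =>
    rw [SimpleGraph.Walk.cons_isPath_iff] at hw
    exact absurd (SimpleGraph.Walk.end_mem_support q) hw.2

omit [Fintype V] in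
lemma internal_length_two {x y v : V} {w : G.Walk x y}
    (hv : v ∈ w.support) (hvx : v ≠ x) (hvy : v ≠ y) : 2 ≤ w.length := by
  cases w with
  | nil => simp at hv; exact absurd hv hvx
  | cons h q =>
    cases q with
    | nil =>
      simp [SimpleGraph.Walk.support_cons] at hv
      rcases hv with h' | h' <;> [exact absurd h' hvx; exact absurd h' hvy]
    | cons h2 q2 => simp only [SimpleGraph.Walk.length_cons]; omega

/-- Two bare walks sharing a common degree-2 vertex have the same endpoints. -/
lemma bare_ends {x y x' y' v : V} {w : G.Walk x y} {w' : G.Walk x' y'}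
    (hw : IsBareWalk G w) (hw' : IsBareWalk G w')
    (hv : v ∈ w.support) (hv' : v ∈ w'.support) (hdv : G.degree v = 2) :
    (x' = x ∧ y' = y) ∨ (x' = y ∧ y' = x) := by
  have hvx : v ≠ x := fun h => hw.2.2.1 (h ▸ hdv)
  have hvy : v ≠ y := fun h => hw.2.2.2 (h ▸ hdv)
  have hvx' : v ≠ x' := fun h => hw'.2.2.1 (h ▸ hdv)
  have hvy' : v ≠ y' := fun h => hw'.2.2.2 (h ▸ hdv)
  have hsub := bare_subset hw hw' hv hv' hvx' hvy'
  have hx'w : x' ∈ w.support := hsub x' (SimpleGraph.Walk.start_mem_support _)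
  have hy'w : y' ∈ w.support := hsub y' (SimpleGraph.Walk.end_mem_support _)
  have hends : ∀ z ∈ w.support, G.degree z ≠ 2 → z = x ∨ z = y := by
    intro z hz hdz
    by_contra hcon
    push_neg at hcon
    exact hdz (hw.2.1 z hz hcon.1 hcon.2)
  have hx'xy := hends x' hx'w hw'.2.2.1
  have hy'xy := hends y' hy'w hw'.2.2.2
  have hx'y' : x' ≠ y' := by
    rintro rfl
    have := path_loop_support w' hw'.1
    rw [this] at hv'
    simp at hv'
    exact hvx' hv'
  rcases hx'xy with rfl | rfl
  · rcases hy'xy with h | rfl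
    · exact absurd h.symm hx'y'
    · exact Or.inl ⟨rfl, rfl⟩
  · rcases hy'xy with rfl | h
    · exact Or.inr ⟨rfl, rfl⟩
    · exact absurd h.symm hx'y'

/-- In a tree, a path whose start has degree 2 can be extended. -/
lemma bare_extend (hT : G.IsTree) {x y : V} (w : G.Walk x y) (hw : w.IsPath)
    (hx : G.degree x = 2) : ∃ x', G.Adj x x' ∧ x' ∉ w.support := by
  by_contra hcon
  push_neg at hcon
  have h2 : 1 < (G.neighborFinset x).card := by
    rw [← SimpleGraph.degree, hx]; omega
  obtain ⟨a, ha, b, hb, hab⟩ := Finset.one_lt_card.mp h2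
  rw [SimpleGraph.mem_neighborFinset] at ha hb
  cases w with
  | nil =>
    have := hcon a ha
    simp at this
    subst this
    exact G.irrefl ha
  | @cons x b0 y h1 q =>
    rw [SimpleGraph.Walk.cons_isPath_iff] at hw
    obtain ⟨u, hu, hune⟩ : ∃ u, G.Adj x u ∧ u ≠ b0 := by
      by_cases hA : a = b0
      · exact ⟨b, hb, fun h => hab (by rw [h, hA])⟩
      · exact ⟨a, ha, hA⟩
    have humem : u ∈ (SimpleGraph.Walk.cons h1 q).support := hcon u hu
    have hux : u ≠ x := hu.ne'
    set w' := SimpleGraph.Walk.cons h1 q with hw'def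
    have hwp : w'.IsPath := by
      rw [hw'def, SimpleGraph.Walk.cons_isPath_iff]; exact hw
    have hp : (w'.takeUntil u humem).IsPath := hwp.takeUntil humem
    have he : s(u, x) ∉ (w'.takeUntil u humem).edges := by
      intro he
      have hew : s(u, x) ∈ w'.edges := SimpleGraph.Walk.edges_takeUntil_subset _ _ he
      rw [hw'def, SimpleGraph.Walk.edges_cons, List.mem_cons] at hew
      rcases hew with hew | hew
      · rw [Sym2.eq_iff] at hew
        rcases hew with ⟨h3, h4⟩ | ⟨h3, h4⟩
        · exact hux h3
        · exact hune h3
      · exact hw.2 (SimpleGraph.Walk.fst_mem_support_of_mem_edges q (Sym2.eq_swap ▸ hew))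
    have hcyc := SimpleGraph.Path.cons_isCycle ⟨w'.takeUntil u humem, hp⟩ hu.symm he
    exact hT.IsAcyclic _ hcyc

/-- Fixing the start of a walk to have degree ≠ 2, keeping the interior property. -/
lemma bare_fix_start (hT : G.IsTree) {v : V} :
    ∀ (k : ℕ) {x y : V} (w : G.Walk x y), w.IsPath → v ∈ w.support →
      (∀ z ∈ w.support, z ≠ x → z ≠ y → G.degree z = 2) →
      Fintype.card V ≤ w.length + k →
      ∃ (x' : V) (w' : G.Walk x' y), w'.IsPath ∧ v ∈ w'.support ∧
        (∀ z ∈ w'.support, z ≠ x' → z ≠ y → G.degree z = 2) ∧ G.degree x' ≠ 2 := by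
  intro k
  induction k with
  | zero =>
    intro x y w hw _ _ hcard
    exact absurd hw.length_lt (by omega)
  | succ k ih =>
    intro x y w hw hv hint hcard
    by_cases hx : G.degree x = 2
    · obtain ⟨x', hadj, hx'⟩ := bare_extend hT w hw hx
      have hw' : (SimpleGraph.Walk.cons hadj.symm w).IsPath := by
        rw [SimpleGraph.Walk.cons_isPath_iff]; exact ⟨hw, hx'⟩
      refine ih (SimpleGraph.Walk.cons hadj.symm w) hw' ?_ ?_ ?_
      · rw [SimpleGraph.Walk.support_cons]; exact List.mem_cons_of_mem _ hv
      · intro z hz hzx' hzy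
        rw [SimpleGraph.Walk.support_cons, List.mem_cons] at hz
        rcases hz with rfl | hz
        · exact absurd rfl hzx'
        · by_cases hzx : z = x
          · exact hzx ▸ hx
          · exact hint z hz hzx hzy
      · rw [SimpleGraph.Walk.length_cons]; omega
    · exact ⟨x, w, hw, hv, hint, hx⟩

/-- Existence of a maximal bare walk through a degree-2 vertex. -/
lemma exists_bare_through (hT : G.IsTree) {v : V} (hv : G.degree v = 2) :
    ∃ (x y : V) (w : G.Walk x y), IsBareWalk G w ∧ v ∈ w.support := by
  obtain ⟨x, w1, hw1, hv1, hint1, hx1⟩ :=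
    bare_fix_start hT (Fintype.card V) (SimpleGraph.Walk.nil : G.Walk v v)
      SimpleGraph.Walk.IsPath.nil (SimpleGraph.Walk.start_mem_support _)
      (by intro z hz _ hzv; simp at hz; exact absurd hz hzv) (by simp)
  have hv1r : v ∈ w1.reverse.support := by
    rw [SimpleGraph.Walk.support_reverse, List.mem_reverse]; exact hv1
  obtain ⟨y, w2, hw2, hv2, hint2, hy2⟩ :=
    bare_fix_start hT (Fintype.card V) w1.reverse hw1.reverse hv1r
      (by
        intro z hz hzv hzx
        rw [SimpleGraph.Walk.support_reverse, List.mem_reverse] at hz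
        exact hint1 z hz hzx hzv)
      (by rw [SimpleGraph.Walk.length_reverse]; omega)
  refine ⟨x, y, w2.reverse, ⟨hw2.reverse, ?_, hx1, hy2⟩, ?_⟩
  · intro z hz hzx hzy
    rw [SimpleGraph.Walk.support_reverse, List.mem_reverse] at hz
    exact hint2 z hz hzy hzx
  · rw [SimpleGraph.Walk.support_reverse, List.mem_reverse]; exact hv2


/-- Pairs of adjacent vertices both of degree at most 2, listed in increasing order. -/
def chargedPairs (G : SimpleGraph V) [Fintype V] [LinearOrder V] : Set (V × V) :=
  {p | p.1 < p.2 ∧ G.Adj p.1 p.2 ∧ G.degree p.1 ≤ 2 ∧ G.degree p.2 ≤ 2}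

/-- The vertex of a path-with-side (a "slot"). -/
def slotVert {G : SimpleGraph V} (t : PathIn G × Bool) : V :=
  if t.2 then t.1.1 else t.1.2.1

section LemA
variable [LinearOrder V]

lemma pair_sorted_eq {q q' : V × V} {c d : V}
    (h1 : q.1 < q.2) (h1' : q'.1 < q'.2)
    (h2 : (c = q.1 ∧ d = q.2) ∨ (c = q.2 ∧ d = q.1))
    (h2' : (c = q'.1 ∧ d = q'.2) ∨ (c = q'.2 ∧ d = q'.1)) : q = q' := by
  rcases h2 with ⟨hc, hd⟩ | ⟨hc, hd⟩ <;> rcases h2' with ⟨hc', hd'⟩ | ⟨hc', hd'⟩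
  · exact Prod.ext (hc ▸ hc') (hd ▸ hd')
  · exfalso
    have : q.1 < q.1 := by
      calc q.1 < q.2 := h1
        _ = q'.1 := by rw [← hd, hd']
        _ < q'.2 := h1'
        _ = q.1 := by rw [← hc', hc]
    exact absurd this (lt_irrefl _)
  · exfalso
    have : q.1 < q.1 := by
      calc q.1 < q.2 := h1
        _ = q'.1 := by rw [← hc, hc']
        _ < q'.2 := h1'
        _ = q.1 := by rw [← hd', hd]
    exact absurd this (lt_irrefl _)
  · exact Prod.ext (hd ▸ hd') (hc ▸ hc')

lemma lemA {G : SimpleGraph V} (hT : G.IsTree) (F : Set (PathIn G)) (hF : F.Finite)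
    (hsep : VertexSep G F) (hcov : VertexCover G F) :
    leafCount G + (chargedPairs G).ncard ≤ 2 * F.ncard := by
  classical
  set L : Set V := {x : V | G.degree x = 1} with hLdef
  -- specification for leaves
  have specL : ∀ ℓ : ↥L, ∃ t : PathIn G × Bool, t.1 ∈ F ∧ slotVert t = ℓ.1 ∧
      (t.1.1 = t.1.2.1 → t.2 = true) := by
    rintro ⟨ℓ, hℓ⟩
    obtain ⟨P, hPF, hPmem⟩ := hcov ℓ
    have hend : ℓ = P.1 ∨ ℓ = P.2.1 :=
      leaf_endpoint P.2.2.2 hPmem (le_of_eq hℓ)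
    by_cases hc : P.1 = ℓ
    · exact ⟨(P, true), hPF, hc, fun _ => rfl⟩
    · refine ⟨(P, false), hPF, ?_, fun h => ?_⟩
      · rcases hend with h | h
        · exact absurd h.symm hc
        · exact h.symm
      · refine absurd ?_ hc
        rcases hend with h' | h'
        · exact h'.symm
        · rw [h]; exact h'.symm
  -- specification for charged pairs
  have specQ : ∀ q : ↥(chargedPairs G), ∃ (t : PathIn G × Bool) (c d : V), t.1 ∈ F ∧
      ((c = q.1.1 ∧ d = q.1.2) ∨ (c = q.1.2 ∧ d = q.1.1)) ∧ G.Adj c d ∧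
      G.degree c ≤ 2 ∧ slotVert t = c ∧ PathIn.vmem c t.1 ∧ ¬ PathIn.vmem d t.1 ∧
      (t.1.1 = t.1.2.1 →
        t.2 = decide (G.degree c = 2 ∧ ∀ u, G.Adj c u → d ≤ u)) := by
    rintro ⟨⟨v, v'⟩, hq⟩
    obtain ⟨hlt, hadj, hd1, hd2⟩ := hq
    obtain ⟨P, hPF, hor⟩ := hsep v v' (ne_of_lt hlt)
    have key : ∀ c d : V, ((c = v ∧ d = v') ∨ (c = v' ∧ d = v)) → G.Adj c d →
        G.degree c ≤ 2 → PathIn.vmem c P → ¬ PathIn.vmem d P →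
        ∃ (t : PathIn G × Bool) (c' d' : V), t.1 ∈ F ∧
        ((c' = v ∧ d' = v') ∨ (c' = v' ∧ d' = v)) ∧ G.Adj c' d' ∧
        G.degree c' ≤ 2 ∧ slotVert t = c' ∧ PathIn.vmem c' t.1 ∧ ¬ PathIn.vmem d' t.1 ∧
        (t.1.1 = t.1.2.1 →
          t.2 = decide (G.degree c' = 2 ∧ ∀ u, G.Adj c' u → d' ≤ u)) := by
      intro c d hcd hadjcd hdegc hin hout
      have hend : c = P.1 ∨ c = P.2.1 :=
        deg_two_endpoint P.2.2.2 hin hdegc hadjcd hout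
      by_cases htriv : P.1 = P.2.1
      · refine ⟨(P, decide (G.degree c = 2 ∧ ∀ u, G.Adj c u → d ≤ u)), c, d,
          hPF, hcd, hadjcd, hdegc, ?_, hin, hout, fun _ => rfl⟩
        have hc1 : P.1 = c := by
          rcases hend with h | h
          · exact h.symm
          · exact htriv.trans h.symm
        unfold slotVert
        split <;> [exact hc1; exact htriv ▸ hc1]
      · by_cases hc : P.1 = c
        · exact ⟨(P, true), c, d, hPF, hcd, hadjcd, hdegc, hc, hin, hout,
            fun h => absurd h htriv⟩
        · refine ⟨(P, false), c, d, hPF, hcd, hadjcd, hdegc, ?_, hin, hout,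
            fun h => absurd h htriv⟩
          rcases hend with h | h
          · exact absurd h.symm hc
          · exact h.symm
    rcases hor with ⟨hin, hout⟩ | ⟨hout, hin⟩
    · exact key v v' (Or.inl ⟨rfl, rfl⟩) hadj hd1 hin hout
    · exact key v' v (Or.inr ⟨rfl, rfl⟩) hadj.symm hd2 hin hout
  choose tL hLF hLvert hLtriv using specL
  choose tQ cQ dQ hQF hQcd hQadj hQdeg hQvert hQin hQout hQtriv using specQ
  haveI : Finite ↥F := hF.to_subtype
  -- the injection
  set f : (↥L ⊕ ↥(chargedPairs G)) → (↥F × Bool) :=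
    Sum.elim (fun ℓ => (⟨(tL ℓ).1, hLF ℓ⟩, (tL ℓ).2))
      (fun q => (⟨(tQ q).1, hQF q⟩, (tQ q).2)) with hfdef
  have hfL : ∀ ℓ, f (Sum.inl ℓ) = (⟨(tL ℓ).1, hLF ℓ⟩, (tL ℓ).2) := fun _ => rfl
  have hfQ : ∀ q, f (Sum.inr q) = (⟨(tQ q).1, hQF q⟩, (tQ q).2) := fun _ => rfl
  -- mixed-case impossibility
  have keyLQ : ∀ (ℓ : ↥L) (q : ↥(chargedPairs G)), tL ℓ = tQ q → False := by
    intro ℓ q heq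
    have hvert : (ℓ : V) = cQ q := by rw [← hLvert ℓ, heq, hQvert q]
    have hdegℓ : G.degree (ℓ : V) = 1 := ℓ.2
    by_cases htriv : (tQ q).1.1 = (tQ q).1.2.1
    · have h1 : (tQ q).2 = true := heq ▸ hLtriv ℓ (heq ▸ htriv)
      have h2 := hQtriv q htriv
      rw [h1] at h2
      have : ¬ (G.degree (cQ q) = 2 ∧ ∀ u, G.Adj (cQ q) u → dQ q ≤ u) := by
        rw [← hvert, hdegℓ]; rintro ⟨h, -⟩; omega
      rw [decide_eq_false this] at h2
      exact Bool.true_eq_false.mp h2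
    · -- nontrivial path containing a leaf internally is impossible here
      have hcend : cQ q = (tQ q).1.1 ∨ cQ q = (tQ q).1.2.1 := by
        have := hQvert q
        unfold slotVert at this
        by_cases hb : (tQ q).2
        · rw [if_pos hb] at this; exact Or.inl this.symm
        · rw [if_neg hb] at this; exact Or.inr this.symm
      refine htriv (endpoint_no_nbr (tQ q).1.2.2.1 hcend (fun u hu hmem => ?_))
      have : u = dQ q := deg_one_unique_nbr (le_of_eq (hvert ▸ hdegℓ)) hu (hQadj q)
      exact hQout q (this ▸ hmem)
  have hinj : Function.Injective f := by
    rintro (ℓ | q) (ℓ' | q') heq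
    · have h1 : tL ℓ = tL ℓ' := by
        have := heq
        rw [hfL, hfL, Prod.mk.injEq, Subtype.mk.injEq] at this
        exact Prod.ext this.1 this.2
      have : (ℓ : V) = (ℓ' : V) := by rw [← hLvert ℓ, h1, hLvert ℓ']
      exact congrArg Sum.inl (Subtype.ext this)
    · exact absurd (by
        have := heq
        rw [hfL, hfQ, Prod.mk.injEq, Subtype.mk.injEq] at this
        exact Prod.ext this.1 this.2) (fun h => keyLQ ℓ q' h)
    · exact absurd (by
        have := heq
        rw [hfQ, hfL, Prod.mk.injEq, Subtype.mk.injEq] at this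
        exact (Prod.ext this.1 this.2).symm) (fun h => keyLQ ℓ' q h)
    · -- both charged pairs
      have h1 : tQ q = tQ q' := by
        have := heq
        rw [hfQ, hfQ, Prod.mk.injEq, Subtype.mk.injEq] at this
        exact Prod.ext this.1 this.2
      have hc : cQ q = cQ q' := by rw [← hQvert q, h1, hQvert q']
      have hP : (tQ q).1 = (tQ q').1 := by rw [h1]
      suffices hq : q.1 = q'.1 by exact congrArg Sum.inr (Subtype.ext hq)
      by_cases hd : dQ q = dQ q'
      · exact pair_sorted_eq q.2.1 q'.2.1 (hQcd q) (hc ▸ hd ▸ hQcd q')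
      · exfalso
        -- d, d' distinct neighbors of c, both avoiding the path
        have hadj' : G.Adj (cQ q) (dQ q') := hc ▸ hQadj q'
        have hout' : ¬ PathIn.vmem (dQ q') (tQ q).1 := hP ▸ hQout q'
        by_cases htriv : (tQ q).1.1 = (tQ q).1.2.1
        · -- tie-break contradiction
          have hdeg2 : G.degree (cQ q) = 2 := by
            refine le_antisymm (hQdeg q) ?_
            have hsub : {dQ q, dQ q'} ⊆ G.neighborFinset (cQ q) := by
              intro z hz
              rw [SimpleGraph.mem_neighborFinset]
              rcases Finset.mem_insert.mp hz with rfl | hz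
              · exact hQadj q
              · rw [Finset.mem_singleton] at hz; subst hz; exact hadj'
            have := Finset.card_le_card hsub
            rw [Finset.card_insert_of_notMem (by simp [hd]), Finset.card_singleton] at this
            rw [SimpleGraph.degree]; omega
          have e1 := hQtriv q htriv
          have e2 := hQtriv q' (h1 ▸ htriv)
          rw [← h1, ← hc] at e2
          rw [e1] at e2
          -- e2 : decide (.. ∧ least (dQ q)) = decide (.. ∧ least (dQ q'))
          have hleast : (∀ u, G.Adj (cQ q) u → dQ q ≤ u) ∨
              (∀ u, G.Adj (cQ q) u → dQ q' ≤ u) := by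
            rcases le_total (dQ q) (dQ q') with hle | hle
            · left
              intro u hu
              rcases deg_two_nbrs (le_of_eq hdeg2) hd (hQadj q) hadj' hu with rfl | rfl
              · exact le_refl _
              · exact hle
            · right
              intro u hu
              rcases deg_two_nbrs (le_of_eq hdeg2) hd (hQadj q) hadj' hu with rfl | rfl
              · exact hle
              · exact le_refl _
          rcases hleast with hle | hle
          · have b1 : decide (G.degree (cQ q) = 2 ∧ ∀ u, G.Adj (cQ q) u → dQ q ≤ u)
                = true := decide_eq_true ⟨hdeg2, hle⟩
            rw [b1] at e2
            have := of_decide_eq_true e2.symm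
            exact hd (le_antisymm (hle _ hadj') (this.2 _ (hQadj q)))
          · have b2 : decide (G.degree (cQ q) = 2 ∧ ∀ u, G.Adj (cQ q) u → dQ q' ≤ u)
                = true := decide_eq_true ⟨hdeg2, hle⟩
            rw [b2] at e2
            have := of_decide_eq_true e2
            exact hd (le_antisymm (this.2 _ hadj') (hle _ (hQadj q)))
        · -- nontrivial: impossible by trivial_of_two_nbrs_excluded
          exact htriv (trivial_of_two_nbrs_excluded (tQ q).1.2.2.2 (hQin q) (hQdeg q)
            hd (hQadj q) hadj' (hQout q) hout')
  -- counting
  calc leafCount G + (chargedPairs G).ncard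
      = Nat.card ↥L + Nat.card ↥(chargedPairs G) := by
        rw [Nat.card_coe_set_eq]; rfl
    _ = Nat.card (↥L ⊕ ↥(chargedPairs G)) := (Nat.card_sum).symm
    _ ≤ Nat.card (↥F × Bool) := Nat.card_le_card_of_injective f hinj
    _ = Nat.card ↥F * 2 := by rw [Nat.card_prod]; simp
    _ = 2 * F.ncard := by rw [Nat.card_coe_set_eq, Nat.mul_comm]

end LemA

end WalkLemmas

section LemB
variable [Fintype V] [LinearOrder V] {G : SimpleGraph V}

lemma bare_reverse {x y : V} {w : G.Walk x y} (hw : IsBareWalk G w) :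
    IsBareWalk G w.reverse := by
  obtain ⟨hp, hint, hx, hy⟩ := hw
  refine ⟨hp.reverse, ?_, hy, hx⟩
  intro z hz hzy hzx
  rw [SimpleGraph.Walk.support_reverse, List.mem_reverse] at hz
  exact hint z hz hzx hzy

omit [Fintype V] in
lemma sorted_pair_cases {v z v' z' : V}
    (h : (if v < z then (v, z) else (z, v)) = (if v' < z' then (v', z') else (z', v'))) :
    (v = v' ∧ z = z') ∨ (v = z' ∧ z = v') := by
  split_ifs at h <;> rw [Prod.mk.injEq] at h
  · exact Or.inl h
  · exact Or.inr h
  · exact Or.inr ⟨h.2, h.1⟩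
  · exact Or.inl ⟨h.2, h.1⟩

lemma lemB (hT : G.IsTree) :
    deg2Count G ≤ (chargedPairs G).ncard + (bareNoLeafSet G).ncard := by
  classical
  set D2 : Set V := {x : V | G.degree x = 2} with hD2def
  have spec : ∀ v : ↥D2, ∃ t : ↥(chargedPairs G) ⊕ ↥(bareNoLeafSet G),
      ∃ (a b : V) (w : G.Walk a b), IsBareWalk G w ∧ a < b ∧ (v : V) ∈ w.support ∧
      ((∃ (q : ↥(chargedPairs G)) (z : V) (hadj : G.Adj v z)
          (q₂ : G.Walk z (if G.degree a = 1 then a else if G.degree b = 1 then b else a)),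
          t = Sum.inl q ∧ (SimpleGraph.Walk.cons hadj q₂).IsPath ∧ z ∈ w.support ∧
          q.1 = (if (v : V) < z then ((v : V), z) else (z, (v : V)))) ∨
       (∃ (i : ↥(bareNoLeafSet G)) (hadj : G.Adj a v) (w₂ : G.Walk v b),
          t = Sum.inr i ∧ G.degree a ≠ 1 ∧ G.degree b ≠ 1 ∧
          i.1 = s(a, b) ∧ w = SimpleGraph.Walk.cons hadj w₂)) := by
    rintro ⟨v, hv⟩
    simp only [hD2def, Set.mem_setOf_eq] at hv
    obtain ⟨x, y, w0, hbare0, hmem0⟩ := exists_bare_through hT hv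
    have hxy : x ≠ y := by
      rintro rfl
      rw [path_loop_support w0 hbare0.1, List.mem_singleton] at hmem0
      exact hbare0.2.2.1 (hmem0 ▸ hv)
    obtain ⟨a, b, w, hbare, hab, hmemw⟩ :
        ∃ (a b : V) (w : G.Walk a b), IsBareWalk G w ∧ a < b ∧ v ∈ w.support := by
      rcases lt_or_gt_of_ne hxy with hlt | hgt
      · exact ⟨x, y, w0, hbare0, hlt, hmem0⟩
      · exact ⟨y, x, w0.reverse, bare_reverse hbare0, hgt, by
          rw [SimpleGraph.Walk.support_reverse, List.mem_reverse]; exact hmem0⟩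
    clear hmem0 hbare0 hxy
    have hva : v ≠ a := fun h => hbare.2.2.1 (h ▸ hv)
    have hvb : v ≠ b := fun h => hbare.2.2.2 (h ▸ hv)
    -- helper to build the inl case given a target end and a walk from v to it
    have mkinl : ∀ (tEnd : V), tEnd = (if G.degree a = 1 then a
          else if G.degree b = 1 then b else a) →
        ∀ (r : G.Walk v tEnd), r.IsPath → (∀ u ∈ r.support, u ∈ w.support) →
        v ≠ tEnd → (∀ u ∈ r.support, u ≠ v → u ≠ tEnd → G.degree u ≤ 2) →
        (G.degree tEnd ≤ 2 ∨ r.length ≠ 1) →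
        ∃ t : ↥(chargedPairs G) ⊕ ↥(bareNoLeafSet G),
        ∃ (a' b' : V) (w' : G.Walk a' b'), IsBareWalk G w' ∧ a' < b' ∧ v ∈ w'.support ∧
        ((∃ (q : ↥(chargedPairs G)) (z : V) (hadj : G.Adj v z)
          (q₂ : G.Walk z (if G.degree a' = 1 then a' else if G.degree b' = 1 then b' else a')),
          t = Sum.inl q ∧ (SimpleGraph.Walk.cons hadj q₂).IsPath ∧ z ∈ w'.support ∧
          q.1 = (if v < z then (v, z) else (z, v))) ∨
        (∃ (i : ↥(bareNoLeafSet G)) (hadj : G.Adj a' v) (w₂ : G.Walk v b'),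
          t = Sum.inr i ∧ G.degree a' ≠ 1 ∧ G.degree b' ≠ 1 ∧
          i.1 = s(a', b') ∧ w' = SimpleGraph.Walk.cons hadj w₂)) := by
      intro tEnd htEnd r hrp hrsub hvt hrdeg hlen
      obtain ⟨z, hadj, q₂, hreq⟩ :=
        (SimpleGraph.Walk.not_nil_iff (p := r)).mp
          (SimpleGraph.Walk.not_nil_of_ne (p := r) hvt)
      have hrpc : (SimpleGraph.Walk.cons hadj q₂).IsPath := by
        rw [hreq] at hrp; exact hrp
      have hzr : z ∈ r.support := by
        rw [hreq, SimpleGraph.Walk.support_cons]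
        exact List.mem_cons_of_mem _ q₂.start_mem_support
      have hzw : z ∈ w.support := hrsub z hzr
      have hzv : z ≠ v := hadj.ne'
      have hdegz : G.degree z ≤ 2 := by
        by_cases hzt : z = tEnd
        · -- then q₂ is a loop path, so r has length 1
          subst hzt
          rw [SimpleGraph.Walk.cons_isPath_iff] at hrpc
          have hsup := path_loop_support q₂ hrpc.1
          have hq₂len : q₂.length = 0 := by
            have := congrArg List.length hsup
            rw [SimpleGraph.Walk.length_support] at this
            simpa using this
          have hrlen : r.length = 1 := by
            rw [hreq, SimpleGraph.Walk.length_cons, hq₂len]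
          rcases hlen with h | h
          · exact h
          · exact absurd hrlen h
        · exact hrdeg z hzr hzv hzt
      have hpairmem : (if v < z then (v, z) else (z, v)) ∈ chargedPairs G := by
        rcases lt_trichotomy v z with hlt | heqvz | hgt
        · rw [if_pos hlt]
          exact ⟨hlt, hadj, le_of_eq hv, hdegz⟩
        · exact absurd heqvz.symm hzv
        · rw [if_neg (not_lt_of_gt hgt)]
          exact ⟨hgt, hadj.symm, hdegz, le_of_eq hv⟩
      exact ⟨Sum.inl ⟨_, hpairmem⟩, a, b, w, hbare, hab, hmemw,
        Or.inl ⟨⟨_, hpairmem⟩, z, hadj, htEnd ▸ q₂, rfl, by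
          subst htEnd; exact hrpc, hzw, rfl⟩⟩
    by_cases hia : G.degree a = 1
    · -- toward a
      have htEnd : a = (if G.degree a = 1 then a else if G.degree b = 1 then b else a) := by
        rw [if_pos hia]
      refine mkinl a htEnd ((SimpleGraph.Walk.takeUntil _ v hmemw).reverse)
        ((hbare.1.takeUntil hmemw).reverse) ?_ (fun h => hbare.2.2.1 (h ▸ hv)) ?_
        (Or.inl (by omega))
      · intro u hu
        rw [SimpleGraph.Walk.support_reverse, List.mem_reverse] at hu
        exact SimpleGraph.Walk.support_takeUntil_subset _ _ hu
      · intro u hu huv hua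
        rw [SimpleGraph.Walk.support_reverse, List.mem_reverse] at hu
        have hub : u ≠ b := by
          rintro rfl
          exact end_not_mem_takeUntil hbare.1 hmemw hvb hu
        have huw : u ∈ _ := SimpleGraph.Walk.support_takeUntil_subset _ _ hu
        exact le_of_eq (hbare.2.1 u huw hua hub)
    · by_cases hib : G.degree b = 1
      · -- toward b
        have htEnd : b = (if G.degree a = 1 then a else if G.degree b = 1 then b else a) := by
          rw [if_neg hia, if_pos hib]
        refine mkinl b htEnd (SimpleGraph.Walk.dropUntil _ v hmemw)
          (hbare.1.dropUntil hmemw) ?_ (fun h => hbare.2.2.2 (h ▸ hv)) ?_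
          (Or.inl (by omega))
        · intro u hu
          exact SimpleGraph.Walk.support_dropUntil_subset _ _ hu
        · intro u hu huv hub
          have hua : u ≠ a := by
            rintro rfl
            exact start_notMem_dropUntil hbare.1 hmemw hva hu
          have huw : u ∈ _ := SimpleGraph.Walk.support_dropUntil_subset _ _ hu
          exact le_of_eq (hbare.2.1 u huw hua hub)
      · -- both ends not leaves : decompose w
        cases w with
        | nil => exact absurd rfl (ne_of_lt hab)
        | @cons a c₀ b h0 w₂ =>
          by_cases hvc : v = c₀
          · -- v is the vertex right after a : map to the bare path itself
            subst hvc
            have himem : s(a, b) ∈ bareNoLeafSet G := by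
              refine ⟨a, b, SimpleGraph.Walk.cons h0 w₂, rfl, hbare.1,
                internal_length_two hmemw hva hvb, hbare.2.1,
                hia, hbare.2.2.1, hib, hbare.2.2.2⟩
            exact ⟨Sum.inr ⟨_, himem⟩, a, b, SimpleGraph.Walk.cons h0 w₂, hbare, hab, hmemw,
              Or.inr ⟨⟨_, himem⟩, h0, w₂, rfl, hia, hib, rfl, rfl⟩⟩
          · -- toward a; since v ≠ c₀, the step from v toward a is not a itself
            have htEnd : a = (if G.degree a = 1 then a
                else if G.degree b = 1 then b else a) := by
              rw [if_neg hia, if_neg hib]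
            set wfull := SimpleGraph.Walk.cons h0 w₂ with hwfull
            refine mkinl a htEnd ((SimpleGraph.Walk.takeUntil wfull v hmemw).reverse)
              ((hbare.1.takeUntil hmemw).reverse) ?_ hva ?_ (Or.inr ?_)
            · intro u hu
              rw [SimpleGraph.Walk.support_reverse, List.mem_reverse] at hu
              exact SimpleGraph.Walk.support_takeUntil_subset _ _ hu
            · intro u hu huv hua
              rw [SimpleGraph.Walk.support_reverse, List.mem_reverse] at hu
              have hub : u ≠ b := by
                rintro rfl
                exact end_not_mem_takeUntil hbare.1 hmemw hvb hu
              have huw : u ∈ _ := SimpleGraph.Walk.support_takeUntil_subset _ _ hu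
              exact le_of_eq (hbare.2.1 u huw hua hub)
            · -- length-1 prefix would force v = c₀
              rw [SimpleGraph.Walk.length_reverse]
              intro hlen1
              apply hvc
              set tk := SimpleGraph.Walk.takeUntil wfull v hmemw with htk
              have hsuplen : tk.support.length = 2 := by
                rw [SimpleGraph.Walk.length_support, hlen1]
              have hcons : tk.support = a :: tk.support.tail :=
                SimpleGraph.Walk.support_eq_cons tk
              obtain ⟨u, hu⟩ : ∃ u, tk.support.tail = [u] := by
                have : tk.support.tail.length = 1 := by
                  have := hsuplen
                  rw [hcons] at this
                  simpa using this
                exact List.length_eq_one_iff.mp this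
              have hvmem : v ∈ tk.support := SimpleGraph.Walk.end_mem_support tk
              have huv : u = v := by
                rw [hcons, hu] at hvmem
                rcases List.mem_cons.mp hvmem with h | h
                · exact absurd h hva
                · exact (by simpa using h : v = u).symm
              have hsupeq : wfull.support = [a, v] ++ (wfull.dropUntil v hmemw).support.tail := by
                conv_lhs => rw [← SimpleGraph.Walk.take_spec wfull hmemw]
                rw [SimpleGraph.Walk.support_append, ← htk, hcons, hu, huv]
              have hw2 : wfull.support = a :: c₀ :: w₂.support.tail := by
                rw [hwfull, SimpleGraph.Walk.support_cons]
                congr 1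
                exact SimpleGraph.Walk.support_eq_cons w₂
              rw [hw2] at hsupeq
              simp only [List.cons_append, List.nil_append, List.cons.injEq] at hsupeq
              exact hsupeq.2.1.symm
  choose t a b w hbare hab hmem hrest using spec
  have hdegD2 : ∀ v : ↥D2, G.degree (v : V) = 2 := by
    intro v
    exact v.2
  have hswapkill : ∀ v v' : ↥D2, a v' = b v → b v' = a v → False := by
    intro v v' h1 h2
    have := hab v
    have := hab v'
    rw [h1, h2] at this
    exact absurd (this.trans (hab v)) (lt_irrefl _)
  have hinj : Function.Injective t := by
    intro v v' heq
    rcases hrest v with ⟨q, z, hadj, q₂, hteq, hpath, hzw, hqval⟩ |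
        ⟨i, hadj, w₂, hteq, hna, hnb, hival, hweq⟩ <;>
      rcases hrest v' with ⟨q', z', hadj', q₂', hteq', hpath', hzw', hqval'⟩ |
        ⟨i', hadj', w₂', hteq', hna', hnb', hival', hweq'⟩
    · -- both inl
      rw [hteq, hteq'] at heq
      have hqq' : q = q' := Sum.inl.inj heq
      by_cases hvv' : (v : V) = (v' : V)
      · exact Subtype.ext hvv'
      exfalso
      have hpair : (if (v : V) < z then ((v : V), z) else (z, (v : V))) =
          (if (v' : V) < z' then ((v' : V), z') else (z', (v' : V))) := by
        rw [← hqval, hqq', hqval']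
      rcases sorted_pair_cases hpair with ⟨h1, h2⟩ | ⟨h1, h2⟩
      · exact hvv' h1
      -- z = ↑v' and z' = ↑v
      subst h2
      have hz'v : z' = (v : V) := h1.symm
      subst hz'v
      -- v' is interior to both chains
      have hends := bare_ends (hbare v) (hbare v') hzw (hmem v') (hdegD2 v')
      have ⟨ha, hb⟩ : a v' = a v ∧ b v' = b v := by
        rcases hends with h | ⟨h1', h2'⟩
        · exact h
        · exact (hswapkill v v' h1' h2').elim
      have hTeq : (if G.degree (a v') = 1 then a v' else if G.degree (b v') = 1 then b v'
          else a v') = (if G.degree (a v) = 1 then a v else if G.degree (b v) = 1 then b v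
          else a v) := by rw [ha, hb]
      rw [SimpleGraph.Walk.cons_isPath_iff] at hpath
      set walk2 := (SimpleGraph.Walk.cons hadj' q₂').copy rfl hTeq with hwalk2
      have hw2p : walk2.IsPath := by
        rw [hwalk2, SimpleGraph.Walk.isPath_copy]
        exact hpath'
      have huniq : q₂ = walk2 := (hT.existsUnique_path _ _).unique hpath.1 hw2p
      exact hpath.2 (by
        rw [huniq, hwalk2, SimpleGraph.Walk.support_copy, SimpleGraph.Walk.support_cons]
        exact List.mem_cons_of_mem _ q₂'.start_mem_support)
    · rw [hteq, hteq'] at heq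
      exact absurd heq (by simp)
    · rw [hteq, hteq'] at heq
      exact absurd heq (by simp)
    · -- both inr
      rw [hteq, hteq'] at heq
      have hii' : i = i' := Sum.inr.inj heq
      have hsym : s(a v, b v) = s(a v', b v') := by
        rw [← hival, hii', hival']
      have ⟨ha, hb⟩ : a v' = a v ∧ b v' = b v := by
        rw [Sym2.eq_iff] at hsym
        rcases hsym with ⟨h1, h2⟩ | ⟨h1, h2⟩
        · exact ⟨h1.symm, h2.symm⟩
        · exact (hswapkill v v' h2.symm h1.symm).elim
      set wcopy := (w v').copy ha hb with hwcopy
      have hwcp : wcopy.IsPath := by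
        rw [hwcopy, SimpleGraph.Walk.isPath_copy]
        exact (hbare v').1
      have huniq : w v = wcopy := (hT.existsUnique_path _ _).unique (hbare v).1 hwcp
      have hs : (w v).support = (w v').support := by
        rw [huniq, hwcopy, SimpleGraph.Walk.support_copy]
      rw [hweq, hweq', SimpleGraph.Walk.support_cons, SimpleGraph.Walk.support_cons] at hs
      have hs2 : w₂.support = w₂'.support := (List.cons.injEq _ _ _ _ ▸ hs).2
      rw [SimpleGraph.Walk.support_eq_cons w₂, SimpleGraph.Walk.support_eq_cons w₂'] at hs2
      have : (v : V) = (v' : V) := ((List.cons.injEq _ _ _ _) ▸ hs2).1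
      exact Subtype.ext this
  haveI : Finite ↥(chargedPairs G) := (Set.toFinite (chargedPairs G)).to_subtype
  haveI : Finite ↥(bareNoLeafSet G) := (Set.toFinite (bareNoLeafSet G)).to_subtype
  calc deg2Count G = Nat.card ↥D2 := rfl
    _ ≤ Nat.card (↥(chargedPairs G) ⊕ ↥(bareNoLeafSet G)) :=
        Nat.card_le_card_of_injective t hinj
    _ = Nat.card ↥(chargedPairs G) + Nat.card ↥(bareNoLeafSet G) := Nat.card_sum
    _ = (chargedPairs G).ncard + (bareNoLeafSet G).ncard := by
        rw [Nat.card_coe_set_eq, Nat.card_coe_set_eq]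
end LemB

theorem stmt14 [Fintype V] (G : SimpleGraph V) (hT : G.IsTree)
    (F : Set (PathIn G)) (hF : F.Finite)
    (hsep : VertexSep G F) (hcov : VertexCover G F) :
    leafCount G + (deg2Count G - (bareNoLeafSet G).ncard) ≤ 2 * F.ncard := by
  classical
  letI : LinearOrder V :=
    LinearOrder.lift' (Fintype.equivFin V) (Fintype.equivFin V).injective
  have hA := lemA hT F hF hsep hcov
  have hB := lemB (G := G) hT
  omega
end
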